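/- arXiv:2009.02116 — 9 statements merged into one kernel-verified Lean document; each statement's English description precedes it below -/
import Mathlib

section
/- Let 0 < γ < α and let μ be a Borel measure on [-1, 1] with μ({0}) = 0 such that sup_{r ∈ (0,1)} r^α · μ({x : r < |x| ≤ 1}) ≤ c. Then for every r ∈ (0,1], ∫_{r < |x| ≤ 1} |x|^γ dμ(x) ≤ (c · 2^{2α - γ} / (2^{α - γ} - 1)) · r^{γ - α}. -/
open MeasureTheory

theorem stmt_2 (α γ c : ℝ) (hγ0 : 0 < γ) (hγα : γ < α) (hc : 0 ≤ c)
    (μ : Measure ℝ)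
    (hsupp : μ {x : ℝ | ¬ x ∈ Set.Icc (-1 : ℝ) 1} = 0)
    (h0 : μ {(0 : ℝ)} = 0)
    (hμ : ∀ r : ℝ, r ∈ Set.Ioo (0 : ℝ) 1 →
      ENNReal.ofReal (r ^ α) * μ {x : ℝ | r < |x| ∧ |x| ≤ 1} ≤ ENNReal.ofReal c) :
    ∀ r : ℝ, r ∈ Set.Ioc (0 : ℝ) 1 →
      ∫⁻ x in {x : ℝ | r < |x| ∧ |x| ≤ 1}, ENNReal.ofReal (|x| ^ γ) ∂μ
        ≤ ENNReal.ofReal (c * 2 ^ (2 * α - γ) / (2 ^ (α - γ) - 1) * r ^ (γ - α)) := by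
  rintro r ⟨hr0, hr1⟩
  have h2 : (0:ℝ) < 2 := two_pos
  -- measure bound for all positive s
  have hμ' : ∀ s : ℝ, 0 < s →
      μ {x : ℝ | s < |x| ∧ |x| ≤ 1} ≤ ENNReal.ofReal (c * s ^ (-α)) := by
    intro s hs
    rcases lt_or_ge s 1 with h1 | h1
    · have key := hμ s ⟨hs, h1⟩
      have hsα : 0 < s ^ α := Real.rpow_pos_of_pos hs α
      have hle : μ {x : ℝ | s < |x| ∧ |x| ≤ 1}
          ≤ ENNReal.ofReal c / ENNReal.ofReal (s ^ α) := by
        rw [ENNReal.le_div_iff_mul_le (Or.inl (ENNReal.ofReal_pos.mpr hsα).ne')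
          (Or.inl ENNReal.ofReal_ne_top)]
        rwa [mul_comm]
      refine hle.trans (le_of_eq ?_)
      rw [Real.rpow_neg hs.le, ← div_eq_mul_inv, ENNReal.ofReal_div_of_pos hsα]
    · have hempty : {x : ℝ | s < |x| ∧ |x| ≤ 1} = ∅ := by
        ext x
        simp only [Set.mem_setOf_eq, Set.mem_empty_iff_false, iff_false, not_and, not_le]
        intro h2'; linarith
      rw [hempty, measure_empty]
      exact zero_le
  -- annuli
  set A : ℕ → Set ℝ := fun k =>
    {x : ℝ | 2 ^ k * r < |x| ∧ |x| ≤ 1 ∧ |x| ≤ 2 ^ (k + 1) * r} with hA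
  have hcover : {x : ℝ | r < |x| ∧ |x| ≤ 1} ⊆ ⋃ k, A k := by
    rintro x ⟨hx1, hx2⟩
    have hex : ∃ n : ℕ, |x| ≤ 2 ^ (n + 1) * r := by
      obtain ⟨n, hn⟩ := pow_unbounded_of_one_lt (|x| / r) one_lt_two
      refine ⟨n, ?_⟩
      have : |x| / r < 2 ^ (n + 1) :=
        hn.trans_le (pow_le_pow_right₀ one_le_two (Nat.le_succ n))
      calc |x| = (|x| / r) * r := by field_simp
        _ ≤ 2 ^ (n + 1) * r := by nlinarith
    refine Set.mem_iUnion.mpr ⟨Nat.find hex, ?_, hx2, Nat.find_spec hex⟩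
    rcases Nat.eq_zero_or_pos (Nat.find hex) with h | h
    · rw [h]; simpa using hx1
    · obtain ⟨m, hm⟩ := Nat.exists_eq_succ_of_ne_zero h.ne'
      have := Nat.find_min hex (m := m) (by omega)
      rw [hm]; push_neg at this; exact this
  set q : ℝ := (2:ℝ) ^ (γ - α) with hqdef
  have hq0 : 0 < q := Real.rpow_pos_of_pos h2 _
  have hq1 : q < 1 := Real.rpow_lt_one_of_one_lt_of_neg one_lt_two (by linarith)
  set D : ℝ := c * 2 ^ γ * r ^ (γ - α) with hDdef
  have hD0 : 0 ≤ D := by positivity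
  have hterm : ∀ k : ℕ, ∫⁻ x in A k, ENNReal.ofReal (|x| ^ γ) ∂μ
      ≤ ENNReal.ofReal (D * q ^ k) := by
    intro k
    have h2k : (0:ℝ) < 2 ^ k * r := by positivity
    have h2k1 : (0:ℝ) < 2 ^ (k + 1) * r := by positivity
    calc ∫⁻ x in A k, ENNReal.ofReal (|x| ^ γ) ∂μ
        ≤ ∫⁻ _ in A k, ENNReal.ofReal ((2 ^ (k + 1) * r) ^ γ) ∂μ := by
          refine setLIntegral_mono measurable_const ?_
          rintro x ⟨_, _, hx3⟩
          exact ENNReal.ofReal_le_ofReal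
            (Real.rpow_le_rpow (abs_nonneg x) hx3 hγ0.le)
      _ = ENNReal.ofReal ((2 ^ (k + 1) * r) ^ γ) * μ (A k) := setLIntegral_const _ _
      _ ≤ ENNReal.ofReal ((2 ^ (k + 1) * r) ^ γ)
            * ENNReal.ofReal (c * (2 ^ k * r) ^ (-α)) := by
          gcongr
          refine le_trans (measure_mono ?_) (hμ' (2 ^ k * r) h2k)
          rintro x ⟨hx1, hx2, _⟩; exact ⟨hx1, hx2⟩
      _ = ENNReal.ofReal (D * q ^ k) := by
          rw [← ENNReal.ofReal_mul (by positivity)]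
          congr 1
          have e1 : ((2:ℝ) ^ (k + 1) * r) ^ γ
              = 2 ^ ((k:ℝ) * γ) * 2 ^ γ * r ^ γ := by
            rw [Real.mul_rpow (by positivity) hr0.le,
              ← Real.rpow_natCast (2:ℝ) (k + 1), ← Real.rpow_mul h2.le]
            push_cast
            rw [show ((k:ℝ) + 1) * γ = (k:ℝ) * γ + γ by ring, Real.rpow_add h2]
          have e2 : ((2:ℝ) ^ k * r) ^ (-α)
              = 2 ^ (-((k:ℝ) * α)) * r ^ (-α) := by
            rw [Real.mul_rpow (by positivity) hr0.le,
              ← Real.rpow_natCast (2:ℝ) k, ← Real.rpow_mul h2.le,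
              show (k:ℝ) * (-α) = -((k:ℝ) * α) by ring]
          have e3 : q ^ k = 2 ^ ((k:ℝ) * γ) * 2 ^ (-((k:ℝ) * α)) := by
            rw [hqdef, ← Real.rpow_natCast ((2:ℝ) ^ (γ - α)) k,
              ← Real.rpow_mul h2.le,
              show (γ - α) * (k:ℝ) = (k:ℝ) * γ + -((k:ℝ) * α) by ring,
              Real.rpow_add h2]
          have e4 : r ^ (γ - α) = r ^ γ * r ^ (-α) := by
            rw [show γ - α = γ + -α by ring, Real.rpow_add hr0]
          rw [e1, e2, e3, hDdef, e4]; ring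
  have hsum : Summable (fun k : ℕ => D * q ^ k) :=
    (summable_geometric_of_lt_one hq0.le hq1).mul_left D
  calc ∫⁻ x in {x : ℝ | r < |x| ∧ |x| ≤ 1}, ENNReal.ofReal (|x| ^ γ) ∂μ
      ≤ ∫⁻ x in ⋃ k, A k, ENNReal.ofReal (|x| ^ γ) ∂μ := lintegral_mono_set hcover
    _ ≤ ∑' k, ∫⁻ x in A k, ENNReal.ofReal (|x| ^ γ) ∂μ := lintegral_iUnion_le _ _
    _ ≤ ∑' k, ENNReal.ofReal (D * q ^ k) := ENNReal.tsum_le_tsum hterm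
    _ = ENNReal.ofReal (∑' k, D * q ^ k) :=
        (ENNReal.ofReal_tsum_of_nonneg (fun k => by positivity) hsum).symm
    _ = ENNReal.ofReal (D * (1 - q)⁻¹) := by
        rw [tsum_mul_left, tsum_geometric_of_lt_one hq0.le hq1]
    _ ≤ ENNReal.ofReal (c * 2 ^ (2 * α - γ) / (2 ^ (α - γ) - 1) * r ^ (γ - α)) := by
        apply ENNReal.ofReal_le_ofReal
        set p : ℝ := (2:ℝ) ^ (α - γ) with hpdef
        have hp1 : 1 < p := by
          rw [hpdef, show (1:ℝ) = (2:ℝ) ^ (0:ℝ) by simp]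
          exact Real.rpow_lt_rpow_of_exponent_lt one_lt_two (by linarith)
        have hp0 : 0 < p := lt_trans one_pos hp1
        have hqp : q = p⁻¹ := by
          rw [hqdef, hpdef, show γ - α = -(α - γ) by ring, Real.rpow_neg h2.le]
        have h1q : (1 - q)⁻¹ = p / (p - 1) := by
          rw [hqp, show 1 - p⁻¹ = (p - 1) / p by field_simp, inv_div]
        have key2 : (2:ℝ) ^ γ * p ≤ 2 ^ (2 * α - γ) := by
          rw [hpdef, ← Real.rpow_add h2,
            show γ + (α - γ) = α by ring]
          exact Real.rpow_le_rpow_of_exponent_le one_le_two (by linarith)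
        have heq : D * (1 - q)⁻¹ = c * (2 ^ γ * p) / (p - 1) * r ^ (γ - α) := by
          rw [h1q, hDdef]; field_simp
        rw [heq]
        gcongr
        all_goals first
          | positivity
          | linarith
          | exact key2
          | exact mul_le_mul_of_nonneg_left key2 hc
end

section
/- For θ ∈ (0,1] and n ≥ 1, define the adapted time-net τ^θ_n = (t^θ_{i,n})_{i=0}^n on [0,T] by t^θ_{i,n} := T(1 - (1 - i/n)^{1/θ}). For a net τ = (t_i)_{i=0}^n define ‖τ‖_θ := max_{i=1,…,n} (t_i - t_{i-1}) / (T - t_{i-1})^{1-θ}. Then T^θ/n ≤ ‖τ^θ_n‖_θ ≤ T^θ/(θ n). -/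
/-- The mesh size `‖τ‖_θ` of a time-net `(t_i)_{i=0}^n` on `[0,T]`. -/
noncomputable def meshTheta (T θ : ℝ) (n : ℕ) (hn : 1 ≤ n) (t : ℕ → ℝ) : ℝ :=
  (Finset.Icc 1 n).sup' (Finset.nonempty_Icc.mpr hn)
    (fun i => (t i - t (i - 1)) / (T - t (i - 1)) ^ (1 - θ))

lemma key_bern {p : ℝ} (hp : 1 ≤ p) {a b : ℝ} (hb : 0 ≤ b) (hab : b ≤ a) :
    a ^ p - b ^ p ≤ p * a ^ (p - 1) * (a - b) := by
  rcases eq_or_lt_of_le (hb.trans hab) with h | ha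
  · have hb0 : b = 0 := le_antisymm (hab.trans_eq h.symm) hb
    have hp0 : p ≠ 0 := by linarith
    simp [← h, hb0, Real.zero_rpow hp0]
  · have hs : -1 ≤ b / a - 1 := by
      have : 0 ≤ b / a := div_nonneg hb ha.le
      linarith
    have h1 : 1 + p * (b / a - 1) ≤ (1 + (b / a - 1)) ^ p :=
      one_add_mul_self_le_rpow_one_add hs hp
    have h2 : (1 + (b / a - 1)) ^ p = b ^ p / a ^ p := by
      rw [show (1 : ℝ) + (b / a - 1) = b / a by ring, Real.div_rpow hb ha.le]
    have hap : (0 : ℝ) < a ^ p := Real.rpow_pos_of_pos ha p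
    have h3 : a ^ p * (1 + p * (b / a - 1)) ≤ b ^ p := by
      have := mul_le_mul_of_nonneg_left (h1.trans h2.le) hap.le
      rwa [mul_div_cancel₀ _ hap.ne'] at this
    have h4 : a ^ (p - 1) = a ^ p / a := by
      rw [Real.rpow_sub ha, Real.rpow_one]
    have h5 : a ^ p * (1 + p * (b / a - 1)) = a ^ p - p * (a ^ p / a) * (a - b) := by
      field_simp
      ring
    rw [h4]
    rw [h5] at h3
    linarith

lemma fval (T θ : ℝ) (hT : 0 < T) (hθ0 : 0 < θ) (hθ1 : θ ≤ 1) (n : ℕ)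
    (hn0 : (0 : ℝ) < n) (i : ℕ) (hi1 : 1 ≤ i) (hin : i ≤ n) :
    (T * (1 - (1 - (i : ℝ) / n) ^ (1 / θ)) -
        T * (1 - (1 - ((i - 1 : ℕ) : ℝ) / n) ^ (1 / θ))) /
      (T - T * (1 - (1 - ((i - 1 : ℕ) : ℝ) / n) ^ (1 / θ))) ^ (1 - θ) =
    T ^ θ * ((1 - ((i : ℝ) - 1) / n) ^ (1 / θ) - (1 - (i : ℝ) / n) ^ (1 / θ)) /
      (1 - ((i : ℝ) - 1) / n) ^ (1 / θ - 1) := by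
  have hcast : ((i - 1 : ℕ) : ℝ) = (i : ℝ) - 1 := by
    have : (1 : ℕ) ≤ i := hi1
    push_cast [Nat.cast_sub this]
    ring
  rw [hcast]
  set p : ℝ := 1 / θ with hp_def
  set a : ℝ := 1 - ((i : ℝ) - 1) / n with ha_def
  set b : ℝ := 1 - (i : ℝ) / n with hb_def
  have ha : 0 < a := by
    rw [ha_def]
    have hir : (i : ℝ) ≤ n := by exact_mod_cast hin
    have : ((i : ℝ) - 1) / n < 1 := by rw [div_lt_one hn0]; linarith
    linarith
  have hpθ : p * θ = 1 := by rw [hp_def]; field_simp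
  have he : p * (1 - θ) = p - 1 := by linear_combination -hpθ
  have hnum : T * (1 - b ^ p) - T * (1 - a ^ p) = T * (a ^ p - b ^ p) := by ring
  have hden1 : T - T * (1 - a ^ p) = T * a ^ p := by ring
  rw [hnum, hden1, Real.mul_rpow hT.le (Real.rpow_nonneg ha.le p),
    ← Real.rpow_mul ha.le, he]
  have hT1θ : (0 : ℝ) < T ^ (1 - θ) := Real.rpow_pos_of_pos hT _
  have hap1 : (0 : ℝ) < a ^ (p - 1) := Real.rpow_pos_of_pos ha _
  have hTsplit : T = T ^ (1 - θ) * T ^ θ := by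
    rw [← Real.rpow_add hT]
    norm_num
  rw [div_eq_div_iff (by positivity) hap1.ne']
  linear_combination ((a ^ p - b ^ p) * a ^ (p - 1)) * hTsplit

theorem stmt_3 (T θ : ℝ) (hT : 0 < T) (hθ : θ ∈ Set.Ioc (0 : ℝ) 1) (n : ℕ) (hn : 1 ≤ n) :
    T ^ θ / n ≤ meshTheta T θ n hn (fun i => T * (1 - (1 - (i : ℝ) / n) ^ (1 / θ))) ∧
    meshTheta T θ n hn (fun i => T * (1 - (1 - (i : ℝ) / n) ^ (1 / θ))) ≤ T ^ θ / (θ * n) := by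
  obtain ⟨hθ0, hθ1⟩ := hθ
  have hn0 : (0 : ℝ) < n := by exact_mod_cast hn
  have hp1 : 1 ≤ 1 / θ := by rw [le_div_iff₀ hθ0]; linarith
  have hTθ : (0 : ℝ) < T ^ θ := Real.rpow_pos_of_pos hT θ
  constructor
  · -- lower bound: use i = 1
    have hmem : 1 ∈ Finset.Icc 1 n := Finset.mem_Icc.mpr ⟨le_refl 1, hn⟩
    refine le_trans ?_ (Finset.le_sup' _ hmem)
    simp only []
    rw [fval T θ hT hθ0 hθ1 n hn0 1 le_rfl hn]
    have hb : (0 : ℝ) ≤ 1 - 1 / n := by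
      have : 1 / (n : ℝ) ≤ 1 := by rw [div_le_one hn0]; exact_mod_cast hn
      linarith
    have hbp : (1 - 1 / (n : ℝ)) ^ (1 / θ) ≤ 1 - 1 / n := by
      rcases eq_or_lt_of_le hb with h | h
      · rw [← h, Real.zero_rpow (by positivity)]
      · calc (1 - 1 / (n : ℝ)) ^ (1 / θ) ≤ (1 - 1 / (n : ℝ)) ^ (1 : ℝ) :=
              Real.rpow_le_rpow_of_exponent_ge h (by
                have : (0 : ℝ) < 1 / n := by positivity
                linarith) hp1
          _ = 1 - 1 / n := Real.rpow_one _
    have hsimp : (1 : ℝ) - (((1 : ℕ) : ℝ) - 1) / n = 1 := by norm_num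
    rw [hsimp]
    simp only [Real.one_rpow, div_one, Nat.cast_one]
    rw [show T ^ θ / (n : ℝ) = T ^ θ * (1 / n) by ring]
    apply mul_le_mul_of_nonneg_left _ hTθ.le
    linarith
  · -- upper bound
    apply Finset.sup'_le
    intro i hi
    simp only [Finset.mem_Icc] at hi
    obtain ⟨hi1, hin⟩ := hi
    simp only []
    rw [fval T θ hT hθ0 hθ1 n hn0 i hi1 hin]
    set a : ℝ := 1 - ((i : ℝ) - 1) / n with ha_def
    set b : ℝ := 1 - (i : ℝ) / n with hb_def
    have hir : (i : ℝ) ≤ n := by exact_mod_cast hin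
    have hir1 : (1 : ℝ) ≤ i := by exact_mod_cast hi1
    have ha : 0 < a := by
      rw [ha_def]
      have : ((i : ℝ) - 1) / n < 1 := by rw [div_lt_one hn0]; linarith
      linarith
    have hb : 0 ≤ b := by
      rw [hb_def]
      have : (i : ℝ) / n ≤ 1 := by rw [div_le_one hn0]; exact hir
      linarith
    have hab : b ≤ a := by
      rw [ha_def, hb_def]
      have : ((i : ℝ) - 1) / n ≤ (i : ℝ) / n := by
        gcongr
        linarith
      linarith
    have hdiff : a - b = 1 / n := by
      rw [ha_def, hb_def]; field_simp; ring
    have hkey := key_bern hp1 hb hab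
    have hap1 : (0 : ℝ) < a ^ (1 / θ - 1) := Real.rpow_pos_of_pos ha _
    rw [div_le_div_iff₀ hap1 (by positivity)]
    rw [hdiff] at hkey
    calc T ^ θ * (a ^ (1 / θ) - b ^ (1 / θ)) * (θ * n)
        ≤ T ^ θ * (1 / θ * a ^ (1 / θ - 1) * (1 / n)) * (θ * n) := by
          apply mul_le_mul_of_nonneg_right _ (by positivity)
          exact mul_le_mul_of_nonneg_left hkey hTθ.le
      _ = T ^ θ * a ^ (1 / θ - 1) := by
          field_simp
end

section
/- For any θ ∈ (0,1] and any deterministic time-net τ_n = (t_i)_{i=0}^n on [0,T] with 0 = t_0 < t_1 < ⋯ < t_n = T, one has ‖τ_n‖_θ ≥ T^θ/n, where ‖τ_n‖_θ := max_{i=1,…,n} (t_i - t_{i-1})/(T - t_{i-1})^{1-θ}. -/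
lemma key_rpow_ineq (a b θ : ℝ) (ha : 0 < a) (hb : 0 ≤ b) (hba : b ≤ a)
    (hθ0 : 0 < θ) (hθ1 : θ ≤ 1) :
    a ^ θ - b ^ θ ≤ (a - b) / a ^ (1 - θ) := by
  have hap : 0 < a ^ (1 - θ) := Real.rpow_pos_of_pos ha _
  rw [le_div_iff₀ hap]
  have h1 : a ^ θ * a ^ (1 - θ) = a := by
    rw [← Real.rpow_add ha]; norm_num
  have h2 : b ≤ b ^ θ * a ^ (1 - θ) := by
    calc b = b ^ (θ + (1 - θ)) := by norm_num
    _ = b ^ θ * b ^ (1 - θ) := Real.rpow_add' hb (by norm_num)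
    _ ≤ b ^ θ * a ^ (1 - θ) := by
        exact mul_le_mul_of_nonneg_left
          (Real.rpow_le_rpow hb hba (by linarith)) (Real.rpow_nonneg hb _)
  nlinarith

theorem stmt_4 (T θ : ℝ) (hT : 0 < T) (hθ : θ ∈ Set.Ioc (0 : ℝ) 1) (n : ℕ) (hn : 1 ≤ n)
    (t : ℕ → ℝ) (ht0 : t 0 = 0) (htn : t n = T)
    (hmono : ∀ i < n, t i < t (i + 1)) :
    T ^ θ / n ≤ meshTheta T θ n hn t := by
  obtain ⟨hθ0, hθ1⟩ := hθ
  set M := meshTheta T θ n hn t with hM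
  -- monotonicity
  have hmono' : ∀ i j, i ≤ j → j ≤ n → t i ≤ t j := by
    intro i j hij hjn
    induction j with
    | zero => simp_all
    | succ k ih =>
      rcases Nat.lt_succ_iff_lt_or_eq.mp (Nat.lt_succ_of_le hij) with h | h
      · exact (ih (Nat.lt_succ_iff.mp h)
          ((Nat.le_succ k).trans hjn)).trans (le_of_lt (hmono k (Nat.lt_of_succ_le hjn)))
      · exact le_of_eq (by rw [h])
  have htT : ∀ i < n, t i < T := by
    intro i hi
    calc t i < t (i + 1) := hmono i hi
    _ ≤ t n := hmono' _ _ (Nat.succ_le_of_lt hi) le_rfl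
    _ = T := htn
  have htTle : ∀ i ≤ n, t i ≤ T := fun i hi => htn ▸ hmono' i n hi le_rfl
  -- each i < n: the telescoping term is ≤ M
  have hMle : ∀ i < n, (T - t i) ^ θ - (T - t (i + 1)) ^ θ ≤ M := by
    intro i hi
    have ha : 0 < T - t i := by linarith [htT i hi]
    have hb : 0 ≤ T - t (i + 1) := by linarith [htTle (i + 1) (Nat.succ_le_of_lt hi)]
    have hba : T - t (i + 1) ≤ T - t i := by linarith [hmono i hi]
    have h1 := key_rpow_ineq (T - t i) (T - t (i + 1)) θ ha hb hba hθ0 hθ1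
    have hmem : i + 1 ∈ Finset.Icc 1 n :=
      Finset.mem_Icc.mpr ⟨Nat.succ_le_succ (Nat.zero_le i), Nat.succ_le_of_lt hi⟩
    have h2 := Finset.le_sup'
      (fun j => (t j - t (j - 1)) / (T - t (j - 1)) ^ (1 - θ)) hmem
    simp only [Nat.add_sub_cancel] at h2
    rw [hM]
    unfold meshTheta
    calc (T - t i) ^ θ - (T - t (i + 1)) ^ θ
        ≤ (T - t i - (T - t (i + 1))) / (T - t i) ^ (1 - θ) := h1
      _ = (t (i + 1) - t i) / (T - t i) ^ (1 - θ) := by ring_nf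
      _ ≤ _ := h2
  -- telescoping sum
  have hsum : T ^ θ ≤ n * M := by
    have htele : ∑ i ∈ Finset.range n, ((T - t i) ^ θ - (T - t (i + 1)) ^ θ)
        = (T - t 0) ^ θ - (T - t n) ^ θ :=
      Finset.sum_range_sub' (fun i => (T - t i) ^ θ) n
    have h0 : (T - t 0) ^ θ - (T - t n) ^ θ = T ^ θ := by
      rw [ht0, htn, sub_zero, sub_self, Real.zero_rpow (ne_of_gt hθ0), sub_zero]
    calc T ^ θ = ∑ i ∈ Finset.range n, ((T - t i) ^ θ - (T - t (i + 1)) ^ θ) := by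
          rw [htele, h0]
      _ ≤ ∑ _i ∈ Finset.range n, M :=
          Finset.sum_le_sum (fun i hi => hMle i (Finset.mem_range.mp hi))
      _ = n * M := by simp [Finset.sum_const, nsmul_eq_mul]
  have hn' : (0 : ℝ) < n := by exact_mod_cast Nat.lt_of_lt_of_le Nat.zero_lt_one hn
  rw [div_le_iff₀ hn']
  linarith
end

section
/- For all real numbers 0 < a < b, one has b·log⁺(1/b) − a·log⁺(1/a) ≤ (b − a)·log⁺(1/(b − a)), where log⁺ x := log₂(max{x, 1}). -/
theorem stmt_5 (a b : ℝ) (ha : 0 < a) (hab : a < b) :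
    b * Real.logb 2 (max (1 / b) 1) - a * Real.logb 2 (max (1 / a) 1)
      ≤ (b - a) * Real.logb 2 (max (1 / (b - a)) 1) := by
  have hb : 0 < b := ha.trans hab
  have hc : 0 < b - a := sub_pos.2 hab
  by_cases hb1 : b ≤ 1
  · have ha1 : a ≤ 1 := hab.le.trans hb1
    have hc1 : b - a ≤ 1 := by linarith
    rw [max_eq_left (one_le_one_div hb hb1), max_eq_left (one_le_one_div ha ha1),
      max_eq_left (one_le_one_div hc hc1), one_div, one_div, one_div,
      Real.logb_inv, Real.logb_inv, Real.logb_inv]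
    have h1 : Real.logb 2 a ≤ Real.logb 2 b := Real.logb_le_logb_of_le one_lt_two ha hab.le
    have h2 : Real.logb 2 (b - a) ≤ Real.logb 2 b :=
      Real.logb_le_logb_of_le one_lt_two hc (by linarith)
    nlinarith [mul_le_mul_of_nonneg_left h1 ha.le, mul_le_mul_of_nonneg_left h2 hc.le]
  · push_neg at hb1
    have hfb : max (1 / b) 1 = 1 := max_eq_right (by
      rw [one_div]; exact inv_le_one_of_one_le₀ hb1.le)
    rw [hfb, Real.logb_one, mul_zero]
    have h1 : 0 ≤ Real.logb 2 (max (1 / a) 1) := Real.logb_nonneg one_lt_two (le_max_right _ _)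
    have h2 : 0 ≤ Real.logb 2 (max (1 / (b - a)) 1) :=
      Real.logb_nonneg one_lt_two (le_max_right _ _)
    nlinarith
end

section
/- Let (Ω, F, P, (F_t)_{t∈[0,T]}) be a filtered probability space and Φ = (Φ_t)_{t∈[0,T]} a nonnegative càdlàg adapted process. Define Φ̄_t := Φ_t + sup_{s∈[0,t]} |ΔΦ_s|, where ΔΦ_s := Φ_s − Φ_{s−}. If Φ belongs to SM_p(P) for some p ∈ [1, ∞), i.e. E[sup_{t∈[a,T]} Φ_t^p | F_a] ≤ c^p Φ_a^p a.s. for all a ∈ [0,T] with best constant ‖Φ‖_{SM_p}, then Φ̄ ∈ SM_p(P) with ‖Φ̄‖_{SM_p(P)} ≤ 3‖Φ‖_{SM_p(P)} + 1. -/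
open MeasureTheory

/-- The set of admissible constants `c` in the definition of the weighted
`SM_p(P)` class: `E[sup_{t∈[a,T]} Φ_t^p | F_a] ≤ c^p Φ_a^p` a.s. for all `a ∈ [0,T]`. -/
noncomputable def smSet {Ω : Type*} [MeasurableSpace Ω] (P : Measure Ω)
    (ℱ : ℝ → MeasurableSpace Ω) (T p : ℝ) (Φ : ℝ → Ω → ℝ) : Set ℝ :=
  {c : ℝ | 0 ≤ c ∧ ∀ a ∈ Set.Icc (0 : ℝ) T,
    ∀ᵐ ω ∂P, (P[(fun ω' => ⨆ t : Set.Icc a T, Φ t.1 ω' ^ p) | ℱ a]) ω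
      ≤ c ^ p * Φ a ω ^ p}

/-- `‖Φ‖_{SM_p(P)}`, the best admissible constant. -/
noncomputable def smNorm {Ω : Type*} [MeasurableSpace Ω] (P : Measure Ω)
    (ℱ : ℝ → MeasurableSpace Ω) (T p : ℝ) (Φ : ℝ → Ω → ℝ) : ℝ :=
  sInf (smSet P ℱ T p Φ)

/-- The modified weight `Φ̄_t = Φ_t + sup_{s ∈ [0,t]} |ΔΦ_s|`, where `Φm` is the
process of left limits of `Φ` (with `Φm 0 = Φ 0`). -/
noncomputable def smBar (Φ Φm : ℝ → Ω → ℝ) : ℝ → Ω → ℝ :=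
  fun t ω => Φ t ω + ⨆ s : Set.Icc (0 : ℝ) t, |Φ s.1 ω - Φm s.1 ω|


open MeasureTheory Set Filter Topology


lemma my_young {p x y l : ℝ} (hp : 1 ≤ p) (hx : 0 ≤ x) (hy : 0 ≤ y)
    (hl0 : 0 < l) (hl1 : l < 1) :
    (x + y) ^ p ≤ l ^ (1 - p) * x ^ p + (1 - l) ^ (1 - p) * y ^ p := by
  have hl1' : 0 < 1 - l := by linarith
  have hxl : (0:ℝ) ≤ x / l := div_nonneg hx hl0.le
  have hyl : (0:ℝ) ≤ y / (1 - l) := div_nonneg hy hl1'.le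
  have hconv := (convexOn_rpow hp).2 (mem_Ici.2 hxl) (mem_Ici.2 hyl) hl0.le hl1'.le
    (by ring : l + (1 - l) = 1)
  simp only [smul_eq_mul] at hconv
  have e1 : l * (x / l) + (1 - l) * (y / (1 - l)) = x + y := by
    field_simp
  rw [e1] at hconv
  refine hconv.trans_eq ?_
  have e2 : l * (x / l) ^ p = l ^ (1 - p) * x ^ p := by
    rw [Real.div_rpow hx hl0.le, Real.rpow_sub hl0, Real.rpow_one]
    field_simp
  have e3 : (1 - l) * (y / (1 - l)) ^ p = (1 - l) ^ (1 - p) * y ^ p := by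
    rw [Real.div_rpow hy hl1'.le, Real.rpow_sub hl1', Real.rpow_one]
    field_simp
  rw [e2, e3]

lemma my_young_eq {p x y : ℝ} (hp : 1 ≤ p) (hx : 0 < x) (hy : 0 < y) :
    (x / (x + y)) ^ (1 - p) * x ^ p + (1 - x / (x + y)) ^ (1 - p) * y ^ p = (x + y) ^ p := by
  have hxy : 0 < x + y := by linarith
  have h1 : 1 - x / (x + y) = y / (x + y) := by field_simp; ring
  rw [h1, Real.div_rpow hx.le hxy.le, Real.div_rpow hy.le hxy.le]
  rw [div_mul_eq_mul_div, div_mul_eq_mul_div]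
  rw [← Real.rpow_add hx, ← Real.rpow_add hy]
  have e : 1 - p + p = 1 := by ring
  rw [e, Real.rpow_one, Real.rpow_one]
  rw [← add_div]
  rw [eq_comm, Real.rpow_def_of_pos hxy, Real.rpow_def_of_pos hxy, eq_div_iff (by positivity)]
  rw [← Real.exp_add]
  have : Real.log (x+y) * p + Real.log (x+y) * (1-p) = Real.log (x+y) := by ring
  rw [this, Real.exp_log hxy]

lemma my_opt {p x y L : ℝ} (hp : 1 ≤ p) (hx : 0 ≤ x) (hy : 0 ≤ y)
    (h : ∀ l : ℚ, 0 < (l:ℝ) → (l:ℝ) < 1 →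
      L ≤ (l:ℝ) ^ (1 - p) * x ^ p + (1 - (l:ℝ)) ^ (1 - p) * y ^ p) :
    L ≤ (x + y) ^ p := by
  have hp0 : (0:ℝ) ≤ p := by linarith
  refine le_of_forall_pos_le_add fun η hη => ?_
  -- continuity of δ ↦ (x+y+2δ)^p at δ = 0
  have hcont : ContinuousAt (fun δ : ℝ => (x + y + 2*δ) ^ p) 0 := by
    exact (by fun_prop : ContinuousAt (fun δ : ℝ => x + y + 2*δ) 0).rpow_const
      (Or.inr hp0)
  have hev : ∀ᶠ δ : ℝ in nhds 0, (x + y + 2*δ) ^ p < (x + y) ^ p + η/2 := by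
    have := hcont.tendsto
    simp only [mul_zero, add_zero] at this
    exact this.eventually (tendsto_id.eventually_lt_const (by linarith))
  obtain ⟨δ0, hδ0, hball⟩ := Metric.eventually_nhds_iff.1 hev
  set δ : ℝ := δ0/2 with hδdef
  have hδpos : 0 < δ := by positivity
  have hkey : (x + y + 2*δ) ^ p < (x + y) ^ p + η/2 := by
    apply hball; simp [hδdef, abs_of_pos hδpos]; linarith [abs_of_pos hδ0]
  set x' : ℝ := x + δ with hx'
  set y' : ℝ := y + δ with hy'
  have hx'0 : 0 < x' := by positivity
  have hy'0 : 0 < y' := by positivity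
  set l : ℝ := x' / (x' + y') with hl
  have hsum : 0 < x' + y' := by positivity
  have hl0 : 0 < l := by positivity
  have hl1 : l < 1 := by rw [hl, div_lt_one hsum]; linarith
  set g : ℝ → ℝ := fun z => z ^ (1 - p) * x ^ p + (1 - z) ^ (1 - p) * y ^ p with hg
  have hgl : g l ≤ (x + y) ^ p + η/2 := by
    have h1 : g l ≤ l ^ (1 - p) * x' ^ p + (1 - l) ^ (1 - p) * y' ^ p := by
      have e1 : x ^ p ≤ x' ^ p := Real.rpow_le_rpow hx (by simp [hx']; linarith) hp0
      have e2 : y ^ p ≤ y' ^ p := Real.rpow_le_rpow hy (by simp [hy']; linarith) hp0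
      have p1 : (0:ℝ) ≤ l ^ (1 - p) := Real.rpow_nonneg hl0.le _
      have p2 : (0:ℝ) ≤ (1 - l) ^ (1 - p) := Real.rpow_nonneg (by linarith) _
      exact add_le_add (mul_le_mul_of_nonneg_left e1 p1) (mul_le_mul_of_nonneg_left e2 p2)
    have h2 : l ^ (1 - p) * x' ^ p + (1 - l) ^ (1 - p) * y' ^ p = (x' + y') ^ p :=
      my_young_eq hp hx'0 hy'0
    have h3 : x' + y' = x + y + 2*δ := by rw [hx', hy']; ring
    calc g l ≤ (x' + y') ^ p := h1.trans_eq h2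
      _ = (x + y + 2*δ) ^ p := by rw [h3]
      _ ≤ (x + y) ^ p + η/2 := hkey.le
  -- continuity of g at l, choose rational
  have hgc : ContinuousAt g l := by
    have c1 : ContinuousAt (fun z : ℝ => z ^ (1 - p)) l :=
      continuousAt_id.rpow_const (Or.inl (ne_of_gt hl0))
    have c2 : ContinuousAt (fun z : ℝ => (1 - z) ^ (1 - p)) l :=
      (by fun_prop : ContinuousAt (fun z : ℝ => 1 - z) l).rpow_const (Or.inl (by norm_num; linarith))
    exact ((c1.mul continuousAt_const).add (c2.mul continuousAt_const))
  have hev2 : ∀ᶠ z : ℝ in nhds l, g z < g l + η/2 :=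
    hgc.tendsto.eventually (tendsto_id.eventually_lt_const (by linarith))
  obtain ⟨r, hr, hball2⟩ := Metric.eventually_nhds_iff.1 hev2
  obtain ⟨q, hq1, hq2⟩ := exists_rat_btwn (show max 0 (l - r) < l by
    rcases max_cases 0 (l - r) with ⟨he, _⟩ | ⟨he, _⟩ <;> rw [he] <;> [exact hl0; linarith])
  have hq0 : 0 < (q:ℝ) := lt_of_le_of_lt (le_max_left _ _) hq1
  have hqlt1 : (q:ℝ) < 1 := hq2.trans hl1
  have hqball : g q < g l + η/2 := by
    apply hball2
    rw [Real.dist_eq, abs_of_neg (by linarith)]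
    have := lt_of_le_of_lt (le_max_right 0 (l - r)) hq1
    linarith
  have h5 : L ≤ g q := h q hq0 hqlt1
  exact le_trans h5 (le_trans hqball.le (by linarith))

section Path

variable {f fm : ℝ → ℝ} {T : ℝ}

lemma path_bdd (hT : 0 ≤ T) (h0 : ∀ t, 0 ≤ f t)
    (hrc : ∀ t, ContinuousWithinAt f (Set.Ici t) t)
    (hll : ∀ t, 0 < t → Filter.Tendsto f (nhdsWithin t (Set.Iio t)) (nhds (fm t)))
    (hll0 : fm 0 = f 0) :
    ∃ M : ℝ, 0 ≤ M ∧ ∀ s ∈ Set.Icc (0:ℝ) T, f s ≤ M ∧ fm s ≤ M := by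
  have key : ∀ x ∈ Set.Icc (0:ℝ) T, ∀ᶠ s in nhds x,
      s ∈ Set.Icc (0:ℝ) T → f s ≤ max (f x) (fm x) + 1 := by
    intro x hx
    rw [← nhdsLT_sup_nhdsGE (a := x)]
    rw [Filter.eventually_sup]
    constructor
    · by_cases hx0 : 0 < x
      · have h1 : ∀ᶠ s in 𝓝[<] x, f s < fm x + 1 :=
          (hll x hx0).eventually_lt_const (by linarith)
        exact h1.mono fun s hs _ => by
          have := le_max_right (f x) (fm x); linarith
      · have h1 : ∀ᶠ s in 𝓝[<] x, s ∈ Set.Iio x := self_mem_nhdsWithin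
        exact h1.mono fun s hs hmem => by
          exfalso
          have : (0:ℝ) ≤ s := hmem.1
          have : s < x := hs
          linarith [hx.1, not_lt.1 hx0]
    · have h1 : ∀ᶠ s in 𝓝[≥] x, f s < f x + 1 :=
        (hrc x).eventually_lt_const (by linarith)
      exact h1.mono fun s hs _ => by
        have := le_max_left (f x) (fm x); linarith
  obtain ⟨I, _, hIcov⟩ := (isCompact_Icc (a := (0:ℝ)) (b := T)).elim_nhds_subcover
    (fun x => {s | s ∈ Set.Icc (0:ℝ) T → f s ≤ max (f x) (fm x) + 1})
    (fun x hx => (key x hx))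
  have hne : I.Nonempty := by
    rcases Finset.eq_empty_or_nonempty I with rfl | h
    · exfalso
      have := hIcov (Set.mem_Icc.2 ⟨le_refl 0, hT⟩)
      simpa using this
    · exact h
  set M0 : ℝ := max 0 (I.sup' hne fun x => max (f x) (fm x) + 1) with hM0
  have hM0nn : 0 ≤ M0 := le_max_left _ _
  have hfb : ∀ s ∈ Set.Icc (0:ℝ) T, f s ≤ M0 := by
    intro s hs
    obtain ⟨x, hxI, hxU⟩ := Set.mem_iUnion₂.1 (hIcov hs)
    calc f s ≤ max (f x) (fm x) + 1 := hxU hs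
      _ ≤ I.sup' hne fun x => max (f x) (fm x) + 1 := Finset.le_sup' (fun x => max (f x) (fm x) + 1) hxI
      _ ≤ M0 := le_max_right _ _
  refine ⟨M0, hM0nn, fun s hs => ⟨hfb s hs, ?_⟩⟩
  rcases eq_or_lt_of_le hs.1 with h | h
  · rw [← h, hll0]; exact hfb 0 (Set.mem_Icc.2 ⟨le_refl 0, hT⟩)
  · refine le_of_tendsto (hll s h) ?_
    have h1 : Set.Ioo (0:ℝ) s ∈ 𝓝[<] s := Ioo_mem_nhdsLT h
    exact Filter.eventually_of_mem h1 fun u hu =>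
      hfb u (Set.mem_Icc.2 ⟨hu.1.le, hu.2.le.trans hs.2⟩)

end Path

/-- Countable dense subset of `[a,b]` containing `b`. -/
def Dset (a b : ℝ) : Set ℝ := insert b (Set.Icc a b ∩ Set.range ((↑) : ℚ → ℝ))

lemma Dset_countable (a b : ℝ) : (Dset a b).Countable :=
  (Set.countable_range _).mono Set.inter_subset_right |>.insert b

lemma Dset_subset {a b : ℝ} (hab : a ≤ b) : Dset a b ⊆ Set.Icc a b := by
  intro x hx
  rcases hx with rfl | hx
  · exact Set.mem_Icc.2 ⟨hab, le_refl _⟩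
  · exact hx.1

lemma Dset_nonempty (a b : ℝ) : (Dset a b).Nonempty := ⟨b, Set.mem_insert _ _⟩

lemma sup_dense {g : ℝ → ℝ} {a b M : ℝ} (hab : a ≤ b)
    (hrc : ∀ t, ContinuousWithinAt g (Set.Ici t) t)
    (hbdd : ∀ s ∈ Set.Icc a b, g s ≤ M) :
    ⨆ t : Set.Icc a b, g t.1 = ⨆ t : Dset a b, g t.1 := by
  have hDsub := Dset_subset hab
  have hbddD : BddAbove (Set.range fun t : Dset a b => g t.1) := by
    refine ⟨M, ?_⟩
    rintro _ ⟨t, rfl⟩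
    exact hbdd t.1 (hDsub t.2)
  have hbddI : BddAbove (Set.range fun t : Set.Icc a b => g t.1) := by
    refine ⟨M, ?_⟩
    rintro _ ⟨t, rfl⟩
    exact hbdd t.1 t.2
  haveI : Nonempty (Set.Icc a b) := ⟨⟨a, Set.mem_Icc.2 ⟨le_refl _, hab⟩⟩⟩
  haveI : Nonempty (Dset a b) := ⟨⟨b, Set.mem_insert _ _⟩⟩
  apply le_antisymm
  · refine ciSup_le fun t => ?_
    rcases eq_or_lt_of_le t.2.2 with h | h
    · exact le_ciSup_of_le hbddD ⟨b, Set.mem_insert _ _⟩ (le_of_eq (congrArg g h))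
    · -- approximate from the right by rationals
      have hq : ∀ n : ℕ, ∃ q : ℚ, t.1 < (q:ℝ) ∧ (q:ℝ) < min b (t.1 + 1/(n+1)) := by
        intro n
        refine exists_rat_btwn (lt_min h ?_)
        have : (0:ℝ) < 1/((n:ℝ)+1) := by positivity
        linarith
      choose q hq1 hq2 using hq
      have hmem : ∀ n, ((q n : ℝ)) ∈ Dset a b := by
        intro n
        refine Set.mem_insert_of_mem _ ⟨Set.mem_Icc.2 ⟨t.2.1.trans (hq1 n).le,
          ((hq2 n).trans_le (min_le_left _ _)).le⟩, ⟨q n, rfl⟩⟩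
      have htend : Filter.Tendsto (fun n : ℕ => (q n : ℝ)) Filter.atTop (nhds t.1) := by
        refine tendsto_of_tendsto_of_tendsto_of_le_of_le
          (tendsto_const_nhds) ?_ (fun n => (hq1 n).le)
          (fun n => ((hq2 n).trans_le (min_le_right _ _)).le)
        have h1 : Filter.Tendsto (fun n : ℕ => 1/((n:ℝ)+1)) Filter.atTop (nhds 0) :=
          tendsto_one_div_add_atTop_nhds_zero_nat
        have := h1.const_add t.1
        simpa using this
      have htendw : Filter.Tendsto (fun n : ℕ => (q n : ℝ)) Filter.atTop (𝓝[≥] t.1) :=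
        tendsto_nhdsWithin_of_tendsto_nhds_of_eventually_within _ htend
          (Filter.Eventually.of_forall fun n => (hq1 n).le)
      have hgt : Filter.Tendsto (fun n : ℕ => g (q n : ℝ)) Filter.atTop (nhds (g t.1)) :=
        (hrc t.1).tendsto.comp htendw
      refine le_of_tendsto hgt (Filter.Eventually.of_forall fun n => ?_)
      exact le_ciSup_of_le hbddD ⟨(q n : ℝ), hmem n⟩ (le_refl _)
  · exact ciSup_le fun t => le_ciSup_of_le hbddI ⟨t.1, hDsub t.2⟩ (le_refl _)

lemma limit_point {f fm : ℝ → ℝ} {s : ℝ}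
    (hrc : ContinuousWithinAt f (Set.Ici s) s)
    (hll : 0 < s → Filter.Tendsto f (𝓝[<] s) (nhds (fm s)))
    {x : ℕ → ℝ} (hx0 : ∀ k, 0 ≤ x k) (hxs : Filter.Tendsto x Filter.atTop (nhds s)) :
    ∃ ψ : ℕ → ℕ, StrictMono ψ ∧
      (Filter.Tendsto (fun k => f (x (ψ k))) Filter.atTop (nhds (f s)) ∨
       Filter.Tendsto (fun k => f (x (ψ k))) Filter.atTop (nhds (fm s))) := by
  by_cases h : ∃ᶠ k in Filter.atTop, x k < s
  · obtain ⟨ψ, hψ, hprop⟩ := Filter.extraction_of_frequently_atTop h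
    have hs0 : 0 < s := lt_of_le_of_lt (hx0 (ψ 0)) (hprop 0)
    have htend : Filter.Tendsto (fun k => x (ψ k)) Filter.atTop (𝓝[<] s) :=
      tendsto_nhdsWithin_of_tendsto_nhds_of_eventually_within _
        (hxs.comp hψ.tendsto_atTop) (Filter.Eventually.of_forall fun k => hprop k)
    exact ⟨ψ, hψ, Or.inr ((hll hs0).comp htend)⟩
  · have hev : ∀ᶠ k in Filter.atTop, s ≤ x k := by
      have := Filter.not_frequently.1 h
      exact this.mono fun k hk => not_lt.1 hk
    obtain ⟨ψ, hψ, hprop⟩ := Filter.extraction_of_frequently_atTop hev.frequently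
    have htend : Filter.Tendsto (fun k => x (ψ k)) Filter.atTop (𝓝[≥] s) :=
      tendsto_nhdsWithin_of_tendsto_nhds_of_eventually_within _
        (hxs.comp hψ.tendsto_atTop) (Filter.Eventually.of_forall fun k => hprop k)
    exact ⟨ψ, hψ, Or.inl (hrc.tendsto.comp htend)⟩

/-- Index type of pairs of points of `Dset 0 a` at distance at most `1/(n+1)`. -/
def JPair (a : ℝ) (n : ℕ) : Type :=
  {q : Dset 0 a × Dset 0 a // |(q.1.1 : ℝ) - (q.2.1 : ℝ)| ≤ 1/(n+1)}

instance JPair.countable (a : ℝ) (n : ℕ) : Countable (JPair a n) := by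
  haveI := (Dset_countable 0 a).to_subtype
  exact Subtype.countable

instance JPair.nonempty (a : ℝ) (n : ℕ) : Nonempty (JPair a n) :=
  ⟨⟨(⟨a, Set.mem_insert _ _⟩, ⟨a, Set.mem_insert _ _⟩), by simp; positivity⟩⟩

lemma abs_sub_le_max {x y : ℝ} (hx : 0 ≤ x) (hy : 0 ≤ y) : |x - y| ≤ max x y := by
  rw [abs_sub_le_iff]
  constructor
  · have := le_max_left x y; linarith
  · have := le_max_right x y; linarith

lemma jump_sup_eq {f fm : ℝ → ℝ} {a M : ℝ} (ha : 0 ≤ a)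
    (h0 : ∀ t, 0 ≤ f t)
    (hrc : ∀ t, ContinuousWithinAt f (Set.Ici t) t)
    (hll : ∀ t, 0 < t → Filter.Tendsto f (𝓝[<] t) (nhds (fm t)))
    (hll0 : fm 0 = f 0)
    (hM : ∀ s ∈ Set.Icc (0:ℝ) a, f s ≤ M ∧ fm s ≤ M) :
    ⨆ s : Set.Icc (0:ℝ) a, |f s.1 - fm s.1|
      = ⨅ n : ℕ, ⨆ q : JPair a n, |f q.1.1.1 - f q.1.2.1| := by
  haveI : Nonempty (Set.Icc (0:ℝ) a) := ⟨⟨0, Set.mem_Icc.2 ⟨le_refl _, ha⟩⟩⟩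
  have hfm0 : ∀ s ∈ Set.Icc (0:ℝ) a, 0 ≤ fm s := by
    intro s hs
    rcases eq_or_lt_of_le hs.1 with h | h
    · rw [← h, hll0]; exact h0 0
    · exact ge_of_tendsto (hll s h) (Filter.Eventually.of_forall fun u => h0 u)
  have hDsub : Dset 0 a ⊆ Set.Icc (0:ℝ) a := Dset_subset ha
  -- boundedness of the two suprema
  have hbddJ : BddAbove (Set.range fun s : Set.Icc (0:ℝ) a => |f s.1 - fm s.1|) := by
    refine ⟨M, ?_⟩; rintro _ ⟨s, rfl⟩
    exact (abs_sub_le_max (h0 _) (hfm0 _ s.2)).trans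
      (max_le (hM _ s.2).1 (hM _ s.2).2)
  have hbddW : ∀ n : ℕ, BddAbove (Set.range fun q : JPair a n => |f q.1.1.1 - f q.1.2.1|) := by
    intro n
    refine ⟨M, ?_⟩; rintro _ ⟨q, rfl⟩
    exact (abs_sub_le_max (h0 _) (h0 _)).trans
      (max_le (hM _ (hDsub q.1.1.2)).1 (hM _ (hDsub q.1.2.2)).1)
  set J : ℝ := ⨆ s : Set.Icc (0:ℝ) a, |f s.1 - fm s.1| with hJdef
  set w : ℕ → ℝ := fun n => ⨆ q : JPair a n, |f q.1.1.1 - f q.1.2.1| with hwdef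
  have hJ0 : 0 ≤ J := le_ciSup_of_le hbddJ ⟨0, Set.mem_Icc.2 ⟨le_refl _, ha⟩⟩
    (by simp [hll0])
  have hw0 : ∀ n, 0 ≤ w n := fun n =>
    le_ciSup_of_le (hbddW n) (Classical.arbitrary _) (abs_nonneg _)
  -- Claim A : J ≤ w n for every n
  have claimA : ∀ n, J ≤ w n := by
    intro n
    refine ciSup_le fun s => ?_
    rcases eq_or_lt_of_le s.2.1 with h | hs0
    · -- s = 0 : jump is zero
      have : |f s.1 - fm s.1| = 0 := by rw [← h, hll0]; simp
      rw [this]; exact hw0 n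
    · -- 0 < s
      -- the sequence approaching from the left
      obtain ⟨K, hK⟩ := exists_nat_one_div_lt (show (0:ℝ) < s.1/2 by linarith)
      have hu : ∀ k : ℕ, ∃ q : ℚ, max (s.1 - 1/(k+1)) (s.1/2) < (q:ℝ) ∧ (q:ℝ) < s.1 := by
        intro k
        apply exists_rat_btwn
        rcases max_cases (s.1 - 1/(k+1)) (s.1/2) with ⟨he, _⟩ | ⟨he, _⟩ <;> rw [he]
        · have : (0:ℝ) < 1/((k:ℝ)+1) := by positivity
          linarith
        · linarith
      choose u hu1 hu2 using hu
      have hu0 : ∀ k, (0:ℝ) < (u k : ℝ) := fun k =>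
        lt_of_le_of_lt (le_trans (by linarith : (0:ℝ) ≤ s.1/2) (le_max_right _ _)) (hu1 k)
      have humem : ∀ k, ((u k : ℝ)) ∈ Dset 0 a :=
        fun k => Set.mem_insert_of_mem _ ⟨Set.mem_Icc.2 ⟨(hu0 k).le,
          (hu2 k).le.trans s.2.2⟩, ⟨u k, rfl⟩⟩
      have hutend : Filter.Tendsto (fun k : ℕ => (u k : ℝ)) Filter.atTop (nhds s.1) := by
        refine tendsto_of_tendsto_of_tendsto_of_le_of_le ?_ tendsto_const_nhds
          (fun k => (hu1 k).le.trans' (le_max_left _ _)) (fun k => (hu2 k).le)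
        have h1 : Filter.Tendsto (fun k : ℕ => s.1 - 1/((k:ℝ)+1)) Filter.atTop (nhds (s.1 - 0)) :=
          tendsto_const_nhds.sub tendsto_one_div_add_atTop_nhds_zero_nat
        rw [sub_zero] at h1
        exact h1
      have huw : Filter.Tendsto (fun k : ℕ => (u k : ℝ)) Filter.atTop (𝓝[<] s.1) :=
        tendsto_nhdsWithin_of_tendsto_nhds_of_eventually_within _ hutend
          (Filter.Eventually.of_forall fun k => hu2 k)
      have hfu : Filter.Tendsto (fun k : ℕ => f (u k : ℝ)) Filter.atTop (nhds (fm s.1)) :=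
        (hll s.1 hs0).comp huw
      -- sequence approaching from the right
      have hv : ∃ v : ℕ → ℝ, (∀ k, v k ∈ Dset 0 a) ∧ (∀ k, s.1 ≤ v k) ∧
          (∀ k, v k ≤ s.1 + 1/(k+1)) := by
        rcases eq_or_lt_of_le s.2.2 with hsa | hsa
        · exact ⟨fun _ => a, fun k => Set.mem_insert _ _, fun k => le_of_eq hsa,
            fun k => by
              have h1 : (0:ℝ) < 1/((k:ℝ)+1) := by positivity
              show a ≤ s.1 + 1/((k:ℝ)+1)
              linarith [hsa.ge]⟩
        · have hvq : ∀ k : ℕ, ∃ q : ℚ, s.1 < (q:ℝ) ∧ (q:ℝ) < min a (s.1 + 1/(k+1)) := by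
            intro k
            apply exists_rat_btwn
            refine lt_min hsa ?_
            have : (0:ℝ) < 1/((k:ℝ)+1) := by positivity
            linarith
          choose vq hv1 hv2 using hvq
          refine ⟨fun k => (vq k : ℝ), fun k => Set.mem_insert_of_mem _
            ⟨Set.mem_Icc.2 ⟨(le_trans s.2.1 (hv1 k).le),
              ((hv2 k).trans_le (min_le_left _ _)).le⟩, ⟨vq k, rfl⟩⟩,
            fun k => (hv1 k).le, fun k => ((hv2 k).trans_le (min_le_right _ _)).le⟩
      obtain ⟨v, hvmem, hv1, hv2⟩ := hv
      have hvtend : Filter.Tendsto v Filter.atTop (nhds s.1) := by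
        refine tendsto_of_tendsto_of_tendsto_of_le_of_le tendsto_const_nhds ?_ hv1 hv2
        have h1 : Filter.Tendsto (fun k : ℕ => s.1 + 1/((k:ℝ)+1)) Filter.atTop (nhds (s.1 + 0)) :=
          tendsto_const_nhds.add tendsto_one_div_add_atTop_nhds_zero_nat
        rw [add_zero] at h1
        exact h1
      have hfv : Filter.Tendsto (fun k : ℕ => f (v k)) Filter.atTop (nhds (f s.1)) :=
        (hrc s.1).tendsto.comp (tendsto_nhdsWithin_of_tendsto_nhds_of_eventually_within _
          hvtend (Filter.Eventually.of_forall fun k => hv1 k))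
      -- the differences converge to the jump
      have hdiff : Filter.Tendsto (fun k : ℕ => |f (v k) - f (u k : ℝ)|)
          Filter.atTop (nhds (|f s.1 - fm s.1|)) :=
        ((hfv.sub hfu).abs)
      refine le_of_tendsto hdiff ?_
      rw [Filter.eventually_atTop]
      refine ⟨max (2*n + 1) K, fun k hk => ?_⟩
      have hkn : 2*n + 1 ≤ k := le_trans (le_max_left _ _) hk
      have hkK : K ≤ k := le_trans (le_max_right _ _) hk
      -- gap estimate
      have hgap : |v k - (u k : ℝ)| ≤ 1/(n+1) := by
        have h1 : 1/((k:ℝ)+1) ≤ 1/((K:ℝ)+1) := by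
          apply one_div_le_one_div_of_le (by positivity)
          have : (K:ℝ) ≤ (k:ℝ) := Nat.cast_le.2 hkK
          linarith
        have h2 : 1/((K:ℝ)+1) < s.1/2 := hK
        have h3 : s.1 - 1/((k:ℝ)+1) ≥ s.1/2 := by linarith
        have h4 : max (s.1 - 1/((k:ℝ)+1)) (s.1/2) = s.1 - 1/((k:ℝ)+1) := max_eq_left (by linarith)
        have h5 : s.1 - 1/((k:ℝ)+1) < (u k : ℝ) := by rw [← h4]; exact hu1 k
        have h6 : v k - (u k : ℝ) ≤ 2/((k:ℝ)+1) := by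
          have := hv2 k
          have he : 2/((k:ℝ)+1) = 1/((k:ℝ)+1) + 1/((k:ℝ)+1) := by ring
          linarith
        have h7 : (0:ℝ) ≤ v k - (u k : ℝ) := by
          have := hv1 k; have := hu2 k; linarith
        rw [abs_of_nonneg h7]
        refine h6.trans ?_
        rw [div_le_div_iff₀ (by positivity) (by positivity)]
        have : (2*n + 1 : ℝ) ≤ (k:ℝ) := by exact_mod_cast Nat.cast_le.2 hkn
        push_cast
        nlinarith
      exact le_ciSup_of_le (hbddW n) ⟨(⟨v k, hvmem k⟩, ⟨(u k : ℝ), humem k⟩), hgap⟩ (le_refl _)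
  -- Claim B : ∀ ε > 0, ∃ n, w n ≤ J + ε
  have claimB : ∀ ε : ℝ, 0 < ε → ∃ n, w n ≤ J + ε := by
    intro ε hε
    by_contra hcon
    push_neg at hcon
    have hsel : ∀ n : ℕ, ∃ q : JPair a n, J + ε < |f q.1.1.1 - f q.1.2.1| := by
      intro n
      exact (lt_ciSup_iff (hbddW n)).1 (hcon n)
    choose q hq using hsel
    set u : ℕ → ℝ := fun n => (q n).1.1.1 with hudef
    set v : ℕ → ℝ := fun n => (q n).1.2.1 with hvdef
    have humem : ∀ n, u n ∈ Set.Icc (0:ℝ) a := fun n => hDsub (q n).1.1.2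
    have hvmem : ∀ n, v n ∈ Set.Icc (0:ℝ) a := fun n => hDsub (q n).1.2.2
    have hgap : ∀ n, |u n - v n| ≤ 1/(n+1) := fun n => (q n).2
    obtain ⟨s, hsmem, φ, hφ, hconv⟩ := isCompact_Icc.tendsto_subseq humem
    have hgap0 : Filter.Tendsto (fun k => u (φ k) - v (φ k)) Filter.atTop (nhds 0) := by
      apply squeeze_zero_norm (fun k => hgap (φ k))
      have : Filter.Tendsto (fun n : ℕ => 1/((n:ℝ)+1)) Filter.atTop (nhds 0) :=
        tendsto_one_div_add_atTop_nhds_zero_nat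
      exact this.comp hφ.tendsto_atTop
    have hvconv : Filter.Tendsto (fun k => v (φ k)) Filter.atTop (nhds s) := by
      have h := hconv.sub hgap0
      simp only [sub_zero] at h
      have he : (fun x => (u ∘ φ) x - (u (φ x) - v (φ x))) = fun k => v (φ k) := by
        funext k; simp [Function.comp]
      rwa [he] at h
    -- extract limit points
    obtain ⟨ψ1, hψ1, hLu⟩ := limit_point (hrc s) (hll s) (fun k => (humem (φ k)).1) hconv
    obtain ⟨ψ2, hψ2, hLv⟩ := limit_point (hrc s) (hll s)
      (fun k => (hvmem (φ (ψ1 k))).1) (hvconv.comp hψ1.tendsto_atTop)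
    have hLu' : Filter.Tendsto (fun k => f (u (φ (ψ1 (ψ2 k))))) Filter.atTop
        (nhds (f s)) ∨ Filter.Tendsto (fun k => f (u (φ (ψ1 (ψ2 k))))) Filter.atTop
        (nhds (fm s)) := by
      rcases hLu with h | h
      · exact Or.inl (h.comp hψ2.tendsto_atTop)
      · exact Or.inr (h.comp hψ2.tendsto_atTop)
    -- the jump bound
    have hjump : |f s - fm s| ≤ J := le_ciSup_of_le hbddJ ⟨s, hsmem⟩ (le_refl _)
    have hjump' : |fm s - f s| ≤ J := by rw [abs_sub_comm]; exact hjump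
    have hkey : J + ε ≤ J := by
      rcases hLu' with h1 | h1 <;> rcases hLv with h2 | h2
      all_goals {
        refine le_trans (ge_of_tendsto ((h1.sub h2).abs)
          (Filter.Eventually.of_forall fun k => (hq (φ (ψ1 (ψ2 k)))).le)) ?_
        first
          | simpa using hJ0
          | exact hjump
          | exact hjump'
          | simpa using hJ0 }
    linarith
  -- combine
  have hbddBelow : BddBelow (Set.range w) := ⟨0, by rintro _ ⟨n, rfl⟩; exact hw0 n⟩
  apply le_antisymm
  · exact le_ciInf claimA
  · refine le_of_forall_pos_le_add fun ε hε => ?_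
    obtain ⟨n, hn⟩ := claimB ε hε
    exact ciInf_le_of_le hbddBelow n hn

lemma key_mem {Ω : Type*} [m0 : MeasurableSpace Ω] (P : Measure Ω) [IsProbabilityMeasure P]
    (ℱ : ℝ → MeasurableSpace Ω) (hℱle : ∀ t, ℱ t ≤ m0) (hℱmono : Monotone ℱ)
    (T p : ℝ) (hT : 0 < T) (hp : 1 ≤ p)
    (Φ Φm : ℝ → Ω → ℝ)
    (hΦ0 : ∀ t ω, 0 ≤ Φ t ω)
    (hΦad : ∀ t, Measurable[ℱ t] (Φ t))
    (hΦrc : ∀ ω t, ContinuousWithinAt (fun s => Φ s ω) (Set.Ici t) t)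
    (hΦll : ∀ ω t, 0 < t →
      Filter.Tendsto (fun s => Φ s ω) (nhdsWithin t (Set.Iio t)) (nhds (Φm t ω)))
    (hΦll0 : ∀ ω, Φm 0 ω = Φ 0 ω)
    {c : ℝ} (hc : c ∈ smSet P ℱ T p Φ) :
    (3*c + 1) ∈ smSet P ℱ T p (smBar Φ Φm) := by
  have hp0 : (0:ℝ) < p := lt_of_lt_of_le one_pos hp
  have hc0 : 0 ≤ c := hc.1
  choose M hM0 hM using fun ω => path_bdd (T := T) hT.le (fun t => hΦ0 t ω)
    (hΦrc ω) (hΦll ω) (hΦll0 ω)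
  have hΦm0 : ∀ (ω) (s : ℝ), 0 ≤ s → 0 ≤ Φm s ω := by
    intro ω s hs
    rcases eq_or_lt_of_le hs with h | h
    · rw [← h, hΦll0]; exact hΦ0 0 ω
    · exact ge_of_tendsto (hΦll ω s h) (Filter.Eventually.of_forall fun u => hΦ0 u ω)
  refine ⟨by linarith, fun a ha => ?_⟩
  have haT : a ≤ T := ha.2
  have ha0 : 0 ≤ a := ha.1
  haveI : Nonempty (Set.Icc a T) := ⟨⟨a, Set.mem_Icc.2 ⟨le_refl _, haT⟩⟩⟩
  haveI : Nonempty (Set.Icc (0:ℝ) a) := ⟨⟨0, Set.mem_Icc.2 ⟨le_refl _, ha0⟩⟩⟩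
  set G : Ω → ℝ := fun ω' => ⨆ t : Set.Icc a T, smBar Φ Φm t.1 ω' ^ p with hGdef
  set F : Ω → ℝ := fun ω' => ⨆ t : Set.Icc a T, Φ t.1 ω' ^ p with hFdef
  set J : Ω → ℝ := fun ω => ⨆ s : Set.Icc (0:ℝ) a, |Φ s.1 ω - Φm s.1 ω| with hJdef
  set Jp : Ω → ℝ := fun ω => J ω ^ p with hJpdef
  -- basic pathwise facts
  have hsup_nn : ∀ (ω) (t : ℝ), 0 ≤ ⨆ s : Set.Icc (0:ℝ) t, |Φ s.1 ω - Φm s.1 ω| :=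
    fun ω t => Real.iSup_nonneg fun s => abs_nonneg _
  have hsmBar_nn : ∀ ω t, 0 ≤ smBar Φ Φm t ω :=
    fun ω t => add_nonneg (hΦ0 t ω) (hsup_nn ω t)
  have hJnn : ∀ ω, 0 ≤ J ω := fun ω => Real.iSup_nonneg fun s => abs_nonneg _
  have hFnn : ∀ ω, 0 ≤ F ω :=
    fun ω => Real.iSup_nonneg fun t => Real.rpow_nonneg (hΦ0 _ ω) _
  have habs_le : ∀ (ω) (s : ℝ), s ∈ Set.Icc (0:ℝ) T → |Φ s ω - Φm s ω| ≤ M ω :=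
    fun ω s hs => (abs_sub_le_max (hΦ0 s ω) (hΦm0 ω s hs.1)).trans
      (max_le (hM ω s hs).1 (hM ω s hs).2)
  have hsmBar_le : ∀ ω, ∀ t ∈ Set.Icc a T, smBar Φ Φm t ω ≤ 2 * M ω := by
    intro ω t ht
    have h1 : (⨆ s : Set.Icc (0:ℝ) t, |Φ s.1 ω - Φm s.1 ω|) ≤ M ω := by
      haveI : Nonempty (Set.Icc (0:ℝ) t) := ⟨⟨0, Set.mem_Icc.2 ⟨le_refl _, ha0.trans ht.1⟩⟩⟩
      exact ciSup_le fun s => habs_le ω s.1 ⟨s.2.1, s.2.2.trans ht.2⟩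
    have h2 : Φ t ω ≤ M ω := (hM ω t ⟨ha0.trans ht.1, ht.2⟩).1
    show Φ t ω + _ ≤ 2 * M ω
    linarith
  have bddG : ∀ ω, BddAbove (Set.range fun t : Set.Icc a T => smBar Φ Φm t.1 ω ^ p) := by
    intro ω
    refine ⟨(2 * M ω) ^ p, ?_⟩
    rintro _ ⟨t, rfl⟩
    exact Real.rpow_le_rpow (hsmBar_nn ω t.1) (hsmBar_le ω t.1 t.2) hp0.le
  have bddF : ∀ ω, BddAbove (Set.range fun t : Set.Icc a T => Φ t.1 ω ^ p) := by
    intro ω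
    refine ⟨(M ω) ^ p, ?_⟩
    rintro _ ⟨t, rfl⟩
    exact Real.rpow_le_rpow (hΦ0 t.1 ω) (hM ω t.1 ⟨ha0.trans t.2.1, t.2.2⟩).1 hp0.le
  have bddJ : ∀ ω, BddAbove (Set.range fun s : Set.Icc (0:ℝ) a => |Φ s.1 ω - Φm s.1 ω|) := by
    intro ω
    refine ⟨M ω, ?_⟩
    rintro _ ⟨s, rfl⟩
    exact habs_le ω s.1 ⟨s.2.1, s.2.2.trans haT⟩
  -- the pointwise core inequality
  have core : ∀ ω, ∀ l' : ℝ, 0 < l' → l' < 1 →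
      G ω ≤ l' ^ (1-p) * (2^p * F ω) + (1-l') ^ (1-p) * Jp ω := by
    intro ω l' hl0 hl1
    set Sb : ℝ := F ω ^ p⁻¹ with hSbdef
    have hSbnn : 0 ≤ Sb := Real.rpow_nonneg (hFnn ω) _
    have hΦleSb : ∀ r ∈ Set.Icc a T, Φ r ω ≤ Sb := by
      intro r hr
      have h1 : Φ r ω ^ p ≤ F ω := le_ciSup (bddF ω) (⟨r, hr⟩ : Set.Icc a T)
      calc Φ r ω = (Φ r ω ^ p) ^ p⁻¹ := (Real.rpow_rpow_inv (hΦ0 r ω) (ne_of_gt hp0)).symm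
        _ ≤ Sb := Real.rpow_le_rpow (Real.rpow_nonneg (hΦ0 r ω) _) h1 (inv_nonneg.2 hp0.le)
    have hΦmleSb : ∀ r, a < r → r ≤ T → Φm r ω ≤ Sb := by
      intro r har hrT
      refine le_of_tendsto (hΦll ω r (lt_of_le_of_lt ha0 har)) ?_
      refine Filter.eventually_of_mem (Ioo_mem_nhdsLT har) fun u hu => ?_
      exact hΦleSb u ⟨hu.1.le, hu.2.le.trans hrT⟩
    have hsmBar2 : ∀ t ∈ Set.Icc a T, smBar Φ Φm t ω ≤ 2 * Sb + J ω := by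
      intro t ht
      have hsup : (⨆ s : Set.Icc (0:ℝ) t, |Φ s.1 ω - Φm s.1 ω|) ≤ Sb + J ω := by
        haveI : Nonempty (Set.Icc (0:ℝ) t) := ⟨⟨0, Set.mem_Icc.2 ⟨le_refl _, ha0.trans ht.1⟩⟩⟩
        refine ciSup_le fun s => ?_
        by_cases hsa : s.1 ≤ a
        · exact le_trans (le_ciSup (bddJ ω) (⟨s.1, ⟨s.2.1, hsa⟩⟩ : Set.Icc (0:ℝ) a))
            (le_add_of_nonneg_left hSbnn)
        · push_neg at hsa
          have h1 : Φ s.1 ω ≤ Sb := hΦleSb s.1 ⟨hsa.le, s.2.2.trans ht.2⟩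
          have h2 : Φm s.1 ω ≤ Sb := hΦmleSb s.1 hsa (s.2.2.trans ht.2)
          exact le_trans (abs_sub_le_max (hΦ0 s.1 ω) (hΦm0 ω s.1 s.2.1))
            (le_trans (max_le h1 h2) (le_add_of_nonneg_right (hJnn ω)))
      have h3 : Φ t ω ≤ Sb := hΦleSb t ht
      show Φ t ω + _ ≤ 2 * Sb + J ω
      linarith
    refine ciSup_le fun t => ?_
    have h4 : smBar Φ Φm t.1 ω ^ p ≤ (2 * Sb + J ω) ^ p :=
      Real.rpow_le_rpow (hsmBar_nn ω t.1) (hsmBar2 t.1 t.2) hp0.le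
    have h5 : (2 * Sb + J ω) ^ p ≤ l' ^ (1-p) * (2*Sb) ^ p + (1-l') ^ (1-p) * (J ω) ^ p :=
      my_young hp (by positivity) (hJnn ω) hl0 hl1
    have h6 : (2*Sb : ℝ) ^ p = 2^p * F ω := by
      rw [Real.mul_rpow (by norm_num) hSbnn, hSbdef, Real.rpow_inv_rpow (hFnn ω) (ne_of_gt hp0)]
    calc smBar Φ Φm t.1 ω ^ p ≤ (2 * Sb + J ω) ^ p := h4
      _ ≤ l' ^ (1-p) * (2*Sb) ^ p + (1-l') ^ (1-p) * (J ω) ^ p := h5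
      _ = l' ^ (1-p) * (2^p * F ω) + (1-l') ^ (1-p) * Jp ω := by rw [h6]
  -- measurability of F
  have measF : Measurable F := by
    have hFrep : F = fun ω => ⨆ t : Dset a T, Φ t.1 ω ^ p := by
      funext ω
      exact sup_dense (g := fun s => Φ s ω ^ p) haT
        (fun t => (hΦrc ω t).rpow_const (Or.inr hp0.le))
        (fun s hs => Real.rpow_le_rpow (hΦ0 s ω) (hM ω s ⟨ha0.trans hs.1, hs.2⟩).1 hp0.le)
    rw [hFrep]
    haveI := (Dset_countable a T).to_subtype
    exact Measurable.iSup fun t => (Real.continuous_rpow_const hp0.le).measurable.comp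
      (((hΦad t.1).mono le_rfl le_rfl).mono (hℱle t.1) le_rfl)
  -- measurability of J w.r.t. ℱ a
  have measJ : Measurable[ℱ a] J := by
    have hJrep : J = fun ω => ⨅ n : ℕ, ⨆ q : JPair a n, |Φ q.1.1.1 ω - Φ q.1.2.1 ω| := by
      funext ω
      exact jump_sup_eq (M := M ω) ha0 (fun t => hΦ0 t ω) (hΦrc ω) (hΦll ω) (hΦll0 ω)
        (fun s hs => ⟨(hM ω s ⟨hs.1, hs.2.trans haT⟩).1, (hM ω s ⟨hs.1, hs.2.trans haT⟩).2⟩)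
    rw [hJrep]
    letI : MeasurableSpace Ω := ℱ a
    refine Measurable.iInf fun n => ?_
    refine Measurable.iSup fun q => ?_
    have m1 : Measurable[ℱ a] (Φ q.1.1.1) :=
      (hΦad q.1.1.1).mono (hℱmono ((Dset_subset ha0) q.1.1.2).2) le_rfl
    have m2 : Measurable[ℱ a] (Φ q.1.2.1) :=
      (hΦad q.1.2.1).mono (hℱmono ((Dset_subset ha0) q.1.2.2).2) le_rfl
    exact (m1.sub m2).abs
  by_cases hGint : Integrable G P
  · -- main case
    have hGnn : ∀ ω, 0 ≤ G ω :=
      fun ω => Real.iSup_nonneg fun t => Real.rpow_nonneg (hsmBar_nn ω _) _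
    have hFleG : ∀ ω, F ω ≤ G ω := fun ω => ciSup_le fun t =>
      le_trans (Real.rpow_le_rpow (hΦ0 _ _) (le_add_of_nonneg_right (hsup_nn ω t.1)) hp0.le)
        (le_ciSup (bddG ω) t)
    have hFint : Integrable F P := hGint.mono' measF.aestronglyMeasurable
      (Filter.Eventually.of_forall fun ω => by
        rw [Real.norm_eq_abs, abs_of_nonneg (hFnn ω)]; exact hFleG ω)
    have hJleBar : ∀ ω, J ω ≤ smBar Φ Φm a ω :=
      fun ω => le_add_of_nonneg_left (hΦ0 a ω)
    have hJpnn : ∀ ω, 0 ≤ Jp ω := fun ω => Real.rpow_nonneg (hJnn ω) _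
    have hJpleG : ∀ ω, Jp ω ≤ G ω := fun ω =>
      le_trans (Real.rpow_le_rpow (hJnn ω) (hJleBar ω) hp0.le)
        (le_ciSup (bddG ω) (⟨a, Set.mem_Icc.2 ⟨le_refl a, haT⟩⟩ : Set.Icc a T))
    have measJp : Measurable[ℱ a] Jp :=
      (Real.continuous_rpow_const hp0.le).measurable.comp measJ
    have hJpint : Integrable Jp P := hGint.mono'
      ((measJp.mono (hℱle a) le_rfl).aestronglyMeasurable)
      (Filter.Eventually.of_forall fun ω => by
        rw [Real.norm_eq_abs, abs_of_nonneg (hJpnn ω)]; exact hJpleG ω)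
    have hcondJp : P[Jp|ℱ a] = Jp :=
      condExp_of_stronglyMeasurable (hℱle a) measJp.stronglyMeasurable hJpint
    have hcF : ∀ᵐ ω ∂P, (P[F|ℱ a]) ω ≤ c ^ p * Φ a ω ^ p := hc.2 a ha
    have perl : ∀ l : ℚ, 0 < (l:ℝ) → (l:ℝ) < 1 → ∀ᵐ ω ∂P,
        (P[G|ℱ a]) ω ≤ (l:ℝ)^(1-p) * (2*(c*Φ a ω))^p + (1-(l:ℝ))^(1-p) * (J ω)^p := by
      intro l hl0 hl1
      set c₁ : ℝ := (l:ℝ)^(1-p) * 2^p with hc₁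
      set c₂ : ℝ := (1-(l:ℝ))^(1-p) with hc₂
      have hc₁nn : 0 ≤ c₁ :=
        mul_nonneg (Real.rpow_nonneg hl0.le _) (Real.rpow_nonneg (by norm_num) _)
      have hc₂nn : 0 ≤ c₂ := Real.rpow_nonneg (by linarith) _
      have hH : Integrable (c₁ • F + c₂ • Jp) P := (hFint.smul c₁).add (hJpint.smul c₂)
      have hmono := condExp_mono (m := ℱ a) hGint hH
        (Filter.Eventually.of_forall fun ω => by
          have := core ω (l:ℝ) hl0 hl1
          simp only [Pi.add_apply, Pi.smul_apply, smul_eq_mul, hc₁, hc₂]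
          calc G ω ≤ (l:ℝ)^(1-p) * (2^p * F ω) + (1-(l:ℝ))^(1-p) * Jp ω := this
            _ = (l:ℝ)^(1-p) * 2^p * F ω + (1-(l:ℝ))^(1-p) * Jp ω := by ring)
      have hadd := condExp_add (μ := P) (m := ℱ a) (hFint.smul c₁) (hJpint.smul c₂)
      have hsm1 := condExp_smul (μ := P) (m := ℱ a) c₁ F
      have hsm2 := condExp_smul (μ := P) (m := ℱ a) c₂ Jp
      filter_upwards [hmono, hadd, hsm1, hsm2, hcF] with ω h1 h2 h3 h4 h5
      have e1 : (P[c₁ • F + c₂ • Jp|ℱ a]) ω = c₁ * (P[F|ℱ a]) ω + c₂ * (P[Jp|ℱ a]) ω := by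
        rw [h2]
        simp only [Pi.add_apply]
        rw [h3, h4]
        simp [smul_eq_mul]
      have e2 : (P[Jp|ℱ a]) ω = Jp ω := by rw [hcondJp]
      have step : (P[G|ℱ a]) ω ≤ c₁ * (c ^ p * Φ a ω ^ p) + c₂ * Jp ω := by
        rw [e1, e2] at h1
        have := mul_le_mul_of_nonneg_left h5 hc₁nn
        linarith
      refine step.trans ?_
      have e3 : (2*(c*Φ a ω))^p = 2^p * (c^p * Φ a ω ^ p) := by
        rw [Real.mul_rpow (by norm_num) (mul_nonneg hc0 (hΦ0 a ω)),
          Real.mul_rpow hc0 (hΦ0 a ω)]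
      rw [e3, hc₁, hc₂]
      have : Jp ω = J ω ^ p := rfl
      rw [this]
      ring_nf
      exact le_refl _
    have hall : ∀ᵐ ω ∂P, ∀ l : ℚ, 0 < (l:ℝ) → (l:ℝ) < 1 →
        (P[G|ℱ a]) ω ≤ (l:ℝ)^(1-p) * (2*(c*Φ a ω))^p + (1-(l:ℝ))^(1-p) * (J ω)^p := by
      rw [ae_all_iff]
      intro l
      by_cases hl : 0 < (l:ℝ) ∧ (l:ℝ) < 1
      · exact (perl l hl.1 hl.2).mono fun ω h _ _ => h
      · exact Filter.Eventually.of_forall fun ω h1 h2 => absurd ⟨h1, h2⟩ hl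
    filter_upwards [hall] with ω hω
    have hopt := my_opt (x := 2*(c*Φ a ω)) (y := J ω) hp
      (mul_nonneg (by norm_num) (mul_nonneg hc0 (hΦ0 a ω))) (hJnn ω) hω
    have hxy : 2*(c*Φ a ω) + J ω ≤ (3*c+1) * smBar Φ Φm a ω := by
      have h1 : smBar Φ Φm a ω = Φ a ω + J ω := rfl
      rw [h1]
      nlinarith [hΦ0 a ω, hJnn ω, hc0]
    calc (P[G|ℱ a]) ω ≤ (2*(c*Φ a ω) + J ω)^p := hopt
      _ ≤ ((3*c+1) * smBar Φ Φm a ω)^p := Real.rpow_le_rpow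
          (add_nonneg (mul_nonneg (by norm_num) (mul_nonneg hc0 (hΦ0 a ω))) (hJnn ω)) hxy hp0.le
      _ = (3*c+1)^p * smBar Φ Φm a ω ^ p := Real.mul_rpow (by linarith) (hsmBar_nn ω a)
  · -- degenerate case: the conditional expectation is 0
    rw [condExp_of_not_integrable hGint]
    exact Filter.Eventually.of_forall fun ω => by
      simp only [Pi.zero_apply]
      exact mul_nonneg (Real.rpow_nonneg (by linarith) _)
        (Real.rpow_nonneg (hsmBar_nn ω a) _)

theorem stmt_6 {Ω : Type*} [m0 : MeasurableSpace Ω] (P : Measure Ω) [IsProbabilityMeasure P]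
    (ℱ : ℝ → MeasurableSpace Ω) (hℱle : ∀ t, ℱ t ≤ m0) (hℱmono : Monotone ℱ)
    (T p : ℝ) (hT : 0 < T) (hp : 1 ≤ p)
    (Φ Φm : ℝ → Ω → ℝ)
    (hΦ0 : ∀ t ω, 0 ≤ Φ t ω)
    (hΦad : ∀ t, Measurable[ℱ t] (Φ t))
    (hΦrc : ∀ ω t, ContinuousWithinAt (fun s => Φ s ω) (Set.Ici t) t)
    (hΦll : ∀ ω t, 0 < t →
      Filter.Tendsto (fun s => Φ s ω) (nhdsWithin t (Set.Iio t)) (nhds (Φm t ω)))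
    (hΦll0 : ∀ ω, Φm 0 ω = Φ 0 ω)
    (hΦmem : (smSet P ℱ T p Φ).Nonempty) :
    (smSet P ℱ T p (smBar Φ Φm)).Nonempty ∧
    smNorm P ℱ T p (smBar Φ Φm) ≤ 3 * smNorm P ℱ T p Φ + 1 := by
  have key : ∀ c ∈ smSet P ℱ T p Φ, (3*c+1) ∈ smSet P ℱ T p (smBar Φ Φm) :=
    fun c hc => key_mem P ℱ hℱle hℱmono T p hT hp Φ Φm hΦ0 hΦad hΦrc hΦll hΦll0 hc
  obtain ⟨c, hc⟩ := hΦmem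
  constructor
  · exact ⟨3*c+1, key c hc⟩
  · have hbdd : BddBelow (smSet P ℱ T p (smBar Φ Φm)) := ⟨0, fun x hx => hx.1⟩
    have h1 : ∀ c' ∈ smSet P ℱ T p Φ, smNorm P ℱ T p (smBar Φ Φm) ≤ 3*c'+1 :=
      fun c' hc' => csInf_le hbdd (key c' hc')
    have h2 : (smNorm P ℱ T p (smBar Φ Φm) - 1)/3 ≤ smNorm P ℱ T p Φ := by
      apply le_csInf ⟨c, hc⟩
      intro b hb
      have := h1 b hb
      linarith
    unfold smNorm at h2 ⊢
    linarith
end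

section
/- Let Y be a real random variable whose law has a continuously differentiable density p on ℝ with p' ∈ L¹(ℝ), and suppose p is non-decreasing on (−∞, m) and non-increasing on (m, ∞) for some m ∈ ℝ (i.e. the law is unimodal with mode m). If additionally e^x p(x) → 0 as |x| → ∞ and E[e^Y] < ∞, then ∫_ℝ |e^x − e^m| · |p'(x)| dx = E[e^Y]. In particular, inf_{κ > 0} ∫_ℝ |e^x − κ| · |p'(x)| dx ≤ E[e^Y]. -/
set_option maxHeartbeats 1000000

open MeasureTheory

-- slope sign lemmas
lemma deriv_nonpos_of_antitone {p : ℝ → ℝ} {d m x : ℝ}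
    (h : AntitoneOn p (Set.Ici m)) (hd : HasDerivAt p d x) (hx : m ≤ x) : d ≤ 0 := by
  have ht : Filter.Tendsto (slope p x) (nhdsWithin x (Set.Ioi x)) (nhds d) :=
    (hasDerivAt_iff_tendsto_slope.1 hd).mono_left
      (nhdsWithin_mono x (fun y hy => ne_of_gt hy))
  refine le_of_tendsto ht ?_
  filter_upwards [self_mem_nhdsWithin] with y hy
  have hxy : x < y := hy
  rw [slope_def_field]
  have : p y ≤ p x := h hx (le_trans hx hxy.le) hxy.le
  exact div_nonpos_of_nonpos_of_nonneg (by linarith) (by linarith)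

lemma deriv_nonneg_of_monotone {p : ℝ → ℝ} {d m x : ℝ}
    (h : MonotoneOn p (Set.Iic m)) (hd : HasDerivAt p d x) (hx : x ≤ m) : 0 ≤ d := by
  have ht : Filter.Tendsto (slope p x) (nhdsWithin x (Set.Iio x)) (nhds d) :=
    (hasDerivAt_iff_tendsto_slope.1 hd).mono_left
      (nhdsWithin_mono x (fun y hy => ne_of_lt hy))
  refine ge_of_tendsto ht ?_
  filter_upwards [self_mem_nhdsWithin] with y hy
  have hxy : y < x := hy
  rw [slope_def_field]
  have : p y ≤ p x := h (le_trans hxy.le hx) hx hxy.le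
  exact div_nonneg_of_nonpos (by linarith) (by linarith)

theorem stmt_9 (p p' : ℝ → ℝ) (m : ℝ)
    (hp0 : ∀ x, 0 ≤ p x) (hp1 : ∫ x, p x = 1)
    (hderiv : ∀ x, HasDerivAt p (p' x) x) (hp'cont : Continuous p')
    (hp'int : Integrable p')
    (hmono : MonotoneOn p (Set.Iic m)) (hanti : AntitoneOn p (Set.Ici m))
    (htail_top : Filter.Tendsto (fun x => Real.exp x * p x) Filter.atTop (nhds 0))
    (htail_bot : Filter.Tendsto (fun x => Real.exp x * p x) Filter.atBot (nhds 0))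
    (hexp : Integrable (fun x => Real.exp x * p x)) :
    (∫ x, |Real.exp x - Real.exp m| * |p' x|) = ∫ x, Real.exp x * p x ∧
    (⨅ κ : Set.Ioi (0 : ℝ), ∫ x, |Real.exp x - κ.1| * |p' x|) ≤ ∫ x, Real.exp x * p x := by
  have hpc : Continuous p := by
    rw [continuous_iff_continuousAt]; exact fun x => (hderiv x).continuousAt
  have hpint : Integrable p := by
    by_contra h
    rw [integral_undef h] at hp1
    norm_num at hp1
  -- p tends to 0 at ±∞
  have hpbot : Filter.Tendsto p Filter.atBot (nhds 0) :=
    tendsto_zero_of_hasDerivAt_of_integrableOn_Iic (a := 0)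
      (fun x _ => hderiv x) hp'int.integrableOn hpint.integrableOn
  have hptop : Filter.Tendsto p Filter.atTop (nhds 0) :=
    tendsto_zero_of_hasDerivAt_of_integrableOn_Ioi (a := 0)
      (fun x _ => hderiv x) hp'int.integrableOn hpint.integrableOn
  have hexpc : Continuous (fun x => Real.exp x * p x) := Real.continuous_exp.mul hpc
  set F : ℝ → ℝ := fun x => ∫ t in m..x, Real.exp t * p t with hF
  have hFd : ∀ x, HasDerivAt F (Real.exp x * p x) x := by
    intro x
    exact intervalIntegral.integral_hasDerivAt_right hexp.intervalIntegrable
      hexpc.stronglyMeasurable.stronglyMeasurableAtFilter hexpc.continuousAt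
  set G : ℝ → ℝ := fun x => (Real.exp m - Real.exp x) * p x + F x with hG
  have hGd : ∀ x, HasDerivAt G ((Real.exp m - Real.exp x) * p' x) x := by
    intro x
    have h1 : HasDerivAt (fun y => (Real.exp m - Real.exp y) * p y)
        ((0 - Real.exp x) * p x + (Real.exp m - Real.exp x) * p' x) x :=
      (((hasDerivAt_const x (Real.exp m)).sub (Real.hasDerivAt_exp x)).mul (hderiv x))
    have := h1.add (hFd x)
    exact this.congr_deriv (by ring)
  have hGm : G m = 0 := by simp [hG, hF]
  have hGtop : Filter.Tendsto G Filter.atTop (nhds (∫ x in Set.Ioi m, Real.exp x * p x)) := by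
    have h1 : Filter.Tendsto (fun x => (Real.exp m - Real.exp x) * p x) Filter.atTop (nhds 0) := by
      have := (hptop.const_mul (Real.exp m)).sub htail_top
      simpa [sub_mul] using this
    have h2 : Filter.Tendsto F Filter.atTop (nhds (∫ x in Set.Ioi m, Real.exp x * p x)) :=
      intervalIntegral_tendsto_integral_Ioi m hexp.integrableOn Filter.tendsto_id
    simpa using h1.add h2
  have hGbot : Filter.Tendsto G Filter.atBot (nhds (-∫ x in Set.Iic m, Real.exp x * p x)) := by
    have h1 : Filter.Tendsto (fun x => (Real.exp m - Real.exp x) * p x) Filter.atBot (nhds 0) := by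
      have := (hpbot.const_mul (Real.exp m)).sub htail_bot
      simpa [sub_mul] using this
    have h2 : Filter.Tendsto F Filter.atBot (nhds (-∫ x in Set.Iic m, Real.exp x * p x)) := by
      have h4 := (intervalIntegral_tendsto_integral_Iic m hexp.integrableOn
        (Filter.tendsto_id (α := ℝ))).neg
      refine h4.congr (fun x => ?_)
      rw [hF]
      show -∫ t in x..m, Real.exp t * p t = ∫ t in m..x, Real.exp t * p t
      rw [intervalIntegral.integral_symm m x, neg_neg]
    simpa using h1.add h2
  -- sign facts
  have hsignIoi : ∀ x ∈ Set.Ioi m, 0 ≤ (Real.exp m - Real.exp x) * p' x := by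
    intro x hx
    have h1 : p' x ≤ 0 := deriv_nonpos_of_antitone hanti (hderiv x) (le_of_lt hx)
    have h2 : Real.exp m ≤ Real.exp x := Real.exp_le_exp.2 (le_of_lt hx)
    exact mul_nonneg_of_nonpos_of_nonpos (by linarith) h1
  -- right piece
  have hIoi_int : IntegrableOn (fun x => (Real.exp m - Real.exp x) * p' x) (Set.Ioi m) :=
    integrableOn_Ioi_deriv_of_nonneg' (fun x _ => hGd x) hsignIoi hGtop
  have hIoi_eq : ∫ x in Set.Ioi m, (Real.exp m - Real.exp x) * p' x
      = ∫ x in Set.Ioi m, Real.exp x * p x := by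
    rw [integral_Ioi_of_hasDerivAt_of_nonneg' (fun x _ => hGd x) hsignIoi hGtop, hGm, sub_zero]
  -- left piece
  have hIic_int : IntegrableOn (fun x => (Real.exp m - Real.exp x) * p' x) (Set.Iic m) := by
    refine Integrable.mono' (g := fun x => Real.exp m * |p' x|)
      (hp'int.abs.const_mul (Real.exp m)).integrableOn
      (((continuous_const.sub Real.continuous_exp).mul hp'cont).aestronglyMeasurable.restrict) ?_
    rw [ae_restrict_iff' measurableSet_Iic]
    refine Filter.Eventually.of_forall (fun x hx => ?_)
    have h2 : Real.exp x ≤ Real.exp m := Real.exp_le_exp.2 hx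
    have h3 : (0:ℝ) < Real.exp x := Real.exp_pos x
    rw [Real.norm_eq_abs, abs_mul]
    have : |Real.exp m - Real.exp x| ≤ Real.exp m := by
      rw [abs_of_nonneg (by linarith)]; linarith
    exact mul_le_mul_of_nonneg_right this (abs_nonneg _)
  have hIic_eq : ∫ x in Set.Iic m, (Real.exp m - Real.exp x) * p' x
      = ∫ x in Set.Iic m, Real.exp x * p x := by
    rw [integral_Iic_of_hasDerivAt_of_tendsto' (fun x _ => hGd x) hIic_int hGbot, hGm]
    ring
  -- identify integrands
  have habsIic : ∀ x ∈ Set.Iic m,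
      |Real.exp x - Real.exp m| * |p' x| = (Real.exp m - Real.exp x) * p' x := by
    intro x hx
    have h1 : 0 ≤ p' x := deriv_nonneg_of_monotone hmono (hderiv x) hx
    have h2 : Real.exp x ≤ Real.exp m := Real.exp_le_exp.2 hx
    rw [abs_of_nonpos (by linarith), abs_of_nonneg h1]
    ring
  have habsIoi : ∀ x ∈ Set.Ioi m,
      |Real.exp x - Real.exp m| * |p' x| = (Real.exp m - Real.exp x) * p' x := by
    intro x hx
    have h1 : p' x ≤ 0 := deriv_nonpos_of_antitone hanti (hderiv x) (le_of_lt hx)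
    have h2 : Real.exp m ≤ Real.exp x := Real.exp_le_exp.2 (le_of_lt hx)
    rw [abs_of_nonneg (by linarith), abs_of_nonpos h1]
    ring
  have hqiIic : IntegrableOn (fun x => |Real.exp x - Real.exp m| * |p' x|) (Set.Iic m) :=
    hIic_int.congr_fun (fun x hx => (habsIic x hx).symm) measurableSet_Iic
  have hqiIoi : IntegrableOn (fun x => |Real.exp x - Real.exp m| * |p' x|) (Set.Ioi m) :=
    hIoi_int.congr_fun (fun x hx => (habsIoi x hx).symm) measurableSet_Ioi
  have key : (∫ x, |Real.exp x - Real.exp m| * |p' x|) = ∫ x, Real.exp x * p x := by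
    rw [← intervalIntegral.integral_Iic_add_Ioi hqiIic hqiIoi,
        ← intervalIntegral.integral_Iic_add_Ioi hexp.integrableOn hexp.integrableOn,
        setIntegral_congr_fun measurableSet_Iic habsIic,
        setIntegral_congr_fun measurableSet_Ioi habsIoi, hIic_eq, hIoi_eq]
  refine ⟨key, ?_⟩
  calc (⨅ κ : Set.Ioi (0 : ℝ), ∫ x, |Real.exp x - κ.1| * |p' x|)
      ≤ ∫ x, |Real.exp x - Real.exp m| * |p' x| := by
        have hb : BddBelow (Set.range fun κ : Set.Ioi (0:ℝ) =>
            ∫ x, |Real.exp x - κ.1| * |p' x|) := by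
          refine ⟨0, ?_⟩
          rintro _ ⟨κ, rfl⟩
          exact integral_nonneg (fun x => by positivity)
        exact ciInf_le hb ⟨Real.exp m, Real.exp_pos m⟩
    _ = ∫ x, Real.exp x * p x := key
end

section
/- Let η ∈ [0,1), β ∈ (1+η, 2], and let ℓ be a Lévy measure on ℝ (a Borel measure with ℓ({0})=0 and ∫(x²∧1) dℓ < ∞). If sup_{r∈(0,1)} r^β ℓ({x : r < |x| ≤ 1}) < ∞, then sup_{r∈(0,1]} r^β ∫_{|x| ≤ 1} (|x/r|² ∧ |x/r|^{η+1}) dℓ(x) < ∞. Conversely, the latter finiteness implies the former, so the two conditions are equivalent. -/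
open MeasureTheory

private lemma stmt11_ms (a b : ℝ) : MeasurableSet {x : ℝ | a < |x| ∧ |x| ≤ b} := by
  have h1 : MeasurableSet {x : ℝ | a < |x|} :=
    measurableSet_lt measurable_const continuous_abs.measurable
  have h2 : MeasurableSet {x : ℝ | |x| ≤ b} :=
    measurableSet_le continuous_abs.measurable measurable_const
  exact h1.inter h2

private lemma stmt11_rpow1 (β : ℝ) (k : ℕ) :
    ((1 : ℝ)/2^k)^2 * ((2:ℝ)^(k+1)) ^ β = ((2:ℝ) ^ (β - 2))^k * (2:ℝ) ^ β := by
  have h2 : (0:ℝ) < 2 := two_pos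
  have e1 : ((1:ℝ)/2^k) = (2:ℝ) ^ (-(k:ℝ)) := by
    rw [Real.rpow_neg h2.le, Real.rpow_natCast, one_div]
  have e2 : ((1:ℝ)/2^k)^2 = (2:ℝ) ^ (-(k:ℝ) * 2) := by
    rw [e1, ← Real.rpow_natCast ((2:ℝ) ^ (-(k:ℝ))) 2, ← Real.rpow_mul h2.le]
    norm_num
  have e3 : ((2:ℝ)^(k+1)) ^ β = (2:ℝ) ^ ((((k:ℝ)+1)) * β) := by
    rw [← Real.rpow_natCast (2:ℝ) (k+1), ← Real.rpow_mul h2.le]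
    push_cast; ring_nf
  have e4 : ((2:ℝ) ^ (β - 2))^k = (2:ℝ) ^ ((β - 2) * (k:ℝ)) := by
    rw [← Real.rpow_natCast ((2:ℝ) ^ (β - 2)) k, ← Real.rpow_mul h2.le]
  rw [e2, e3, e4, ← Real.rpow_add h2, ← Real.rpow_add h2]
  congr 1; ring

private lemma stmt11_rpow2 (η β : ℝ) (k : ℕ) :
    ((2:ℝ)^(k+1)) ^ (η + 1) * ((1 : ℝ)/2^k) ^ β
      = ((2:ℝ) ^ (η + 1 - β))^k * (2:ℝ) ^ (η + 1) := by
  have h2 : (0:ℝ) < 2 := two_pos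
  have e1 : ((1:ℝ)/2^k) = (2:ℝ) ^ (-(k:ℝ)) := by
    rw [Real.rpow_neg h2.le, Real.rpow_natCast, one_div]
  have e2 : ((1:ℝ)/2^k) ^ β = (2:ℝ) ^ (-(k:ℝ) * β) := by
    rw [e1, ← Real.rpow_mul h2.le]
  have e3 : ((2:ℝ)^(k+1)) ^ (η+1) = (2:ℝ) ^ ((((k:ℝ)+1)) * (η+1)) := by
    rw [← Real.rpow_natCast (2:ℝ) (k+1), ← Real.rpow_mul h2.le]
    push_cast; ring_nf
  have e4 : ((2:ℝ) ^ (η + 1 - β))^k = (2:ℝ) ^ ((η + 1 - β) * (k:ℝ)) := by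
    rw [← Real.rpow_natCast ((2:ℝ) ^ (η + 1 - β)) k, ← Real.rpow_mul h2.le]
  rw [e2, e3, e4, ← Real.rpow_add h2, ← Real.rpow_add h2]
  congr 1; ring

theorem stmt_11 (η β : ℝ) (hη : η ∈ Set.Ico (0 : ℝ) 1) (hβ : β ∈ Set.Ioc (1 + η) 2)
    (ℓ : Measure ℝ)
    (hℓ0 : ℓ {(0 : ℝ)} = 0)
    (hℓlevy : ∫⁻ x, ENNReal.ofReal (min (x ^ 2) 1) ∂ℓ ≠ ⊤) :
    (⨆ r : Set.Ioo (0 : ℝ) 1,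
        ENNReal.ofReal (r.1 ^ β) * ℓ {x : ℝ | r.1 < |x| ∧ |x| ≤ 1}) < ⊤ ↔
    (⨆ r : Set.Ioc (0 : ℝ) 1,
        ENNReal.ofReal (r.1 ^ β) *
          ∫⁻ x in {x : ℝ | |x| ≤ 1},
            ENNReal.ofReal (min (|x / r.1| ^ 2) (|x / r.1| ^ (η + 1))) ∂ℓ) < ⊤ := by
  obtain ⟨hη0, hη1⟩ := hη
  obtain ⟨hβ1, hβ2⟩ := hβ
  set f : ℝ → ℝ → ENNReal :=
    fun r x => ENNReal.ofReal (min (|x / r| ^ 2) (|x / r| ^ (η + 1))) with hfdef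
  constructor
  · -- hard direction
    intro hM
    set M := (⨆ r : Set.Ioo (0 : ℝ) 1,
        ENNReal.ofReal (r.1 ^ β) * ℓ {x : ℝ | r.1 < |x| ∧ |x| ≤ 1}) with hMdef
    have hMne : M ≠ ⊤ := hM.ne
    have hA : ∀ s : ℝ, 0 < s → s < 1 →
        ENNReal.ofReal (s ^ β) * ℓ {x : ℝ | s < |x| ∧ |x| ≤ 1} ≤ M := fun s h1 h2 =>
      le_iSup (fun r : Set.Ioo (0:ℝ) 1 =>
        ENNReal.ofReal (r.1 ^ β) * ℓ {x : ℝ | r.1 < |x| ∧ |x| ≤ 1}) ⟨s, h1, h2⟩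
    -- the part r < |x| ≤ 1 : works for all β
    have hBpart : ∃ C ≠ (⊤ : ENNReal), ∀ r : ℝ, 0 < r → r ≤ 1 →
        ENNReal.ofReal (r ^ β) * ∫⁻ x in {x : ℝ | r < |x| ∧ |x| ≤ 1}, f r x ∂ℓ ≤ C := by
      refine ⟨∑' k : ℕ, ENNReal.ofReal (((2:ℝ)^(k+1)) ^ (η+1) * ((1:ℝ)/2^k) ^ β) * M,
        ?_, ?_⟩
      · -- finiteness of the geometric sum
        have hrw : ∀ k : ℕ,
            ENNReal.ofReal (((2:ℝ)^(k+1)) ^ (η+1) * ((1:ℝ)/2^k) ^ β) * M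
              = (ENNReal.ofReal ((2:ℝ) ^ (η + 1 - β)))^k
                  * (ENNReal.ofReal ((2:ℝ) ^ (η+1)) * M) := by
          intro k
          rw [stmt11_rpow2 η β k, ENNReal.ofReal_mul (by positivity),
            ENNReal.ofReal_pow (by positivity), mul_assoc]
        rw [tsum_congr hrw, ENNReal.tsum_mul_right, ENNReal.tsum_geometric]
        refine (ENNReal.mul_lt_top (ENNReal.inv_lt_top.2 ?_)
          (ENNReal.mul_lt_top ENNReal.ofReal_lt_top hM)).ne
        refine tsub_pos_iff_lt.2 (ENNReal.ofReal_lt_one.2 ?_)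
        exact Real.rpow_lt_one_of_one_lt_of_neg one_lt_two (by linarith)
      · intro r hr0 hr1
        set B : ℕ → Set ℝ :=
          fun k => {x : ℝ | r * 2^k < |x| ∧ |x| ≤ min 1 (r * 2^(k+1))} with hBdef
        have hBsub : {x : ℝ | r < |x| ∧ |x| ≤ 1} ⊆ ⋃ k, B k := by
          rintro x ⟨hx1, hx2⟩
          have hex : ∃ k : ℕ, |x| ≤ r * 2^(k+1) := by
            obtain ⟨n, hn⟩ := pow_unbounded_of_one_lt ((1:ℝ)/r) one_lt_two
            rw [div_lt_iff₀ hr0] at hn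
            refine ⟨n, le_trans hx2 ?_⟩
            nlinarith [pow_pos (two_pos (α := ℝ)) n, pow_succ (2:ℝ) n]
          refine Set.mem_iUnion.2 ⟨Nat.find hex, ?_, le_min hx2 (Nat.find_spec hex)⟩
          rcases Nat.eq_zero_or_pos (Nat.find hex) with h0 | hpos
          · rw [h0]; simpa using hx1
          · have hmin := Nat.find_min hex (Nat.sub_lt hpos one_pos)
            push_neg at hmin
            have he : Nat.find hex - 1 + 1 = Nat.find hex := by omega
            rwa [he] at hmin
        have step1 : ∫⁻ x in {x : ℝ | r < |x| ∧ |x| ≤ 1}, f r x ∂ℓ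
            ≤ ∑' k : ℕ, ∫⁻ x in B k, f r x ∂ℓ :=
          (lintegral_mono_set hBsub).trans (lintegral_iUnion_le _ _)
        calc ENNReal.ofReal (r ^ β) * ∫⁻ x in {x : ℝ | r < |x| ∧ |x| ≤ 1}, f r x ∂ℓ
            ≤ ENNReal.ofReal (r ^ β) * ∑' k : ℕ, ∫⁻ x in B k, f r x ∂ℓ :=
              mul_le_mul_right step1 _
          _ = ∑' k : ℕ, ENNReal.ofReal (r ^ β) * ∫⁻ x in B k, f r x ∂ℓ :=
              ENNReal.tsum_mul_left.symm
          _ ≤ ∑' k : ℕ, ENNReal.ofReal (((2:ℝ)^(k+1)) ^ (η+1) * ((1:ℝ)/2^k) ^ β) * M := by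
              refine Summable.tsum_le_tsum (fun k => ?_) ENNReal.summable ENNReal.summable
              have hint : ∫⁻ x in B k, f r x ∂ℓ
                  ≤ ENNReal.ofReal (((2:ℝ)^(k+1)) ^ (η+1)) * ℓ (B k) := by
                rw [← setLIntegral_const (B k)]
                refine setLIntegral_mono' (stmt11_ms _ _) ?_
                rintro x ⟨hx1, hx2⟩
                refine ENNReal.ofReal_le_ofReal ((min_le_right _ _).trans ?_)
                have hxr : |x / r| ≤ 2^(k+1) := by
                  rw [abs_div, abs_of_pos hr0, div_le_iff₀ hr0]
                  have h2 := hx2.trans (min_le_right _ _)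
                  linarith
                exact Real.rpow_le_rpow (abs_nonneg _) hxr (by linarith)
              have hmeas : ENNReal.ofReal (r ^ β) * ℓ (B k)
                  ≤ ENNReal.ofReal (((1:ℝ)/2^k) ^ β) * M := by
                rcases lt_or_ge (r * 2^k) 1 with hs | hs
                · have hsub : B k ⊆ {x : ℝ | r * 2^k < |x| ∧ |x| ≤ 1} :=
                    fun x hx => ⟨hx.1, hx.2.trans (min_le_left _ _)⟩
                  have h1 : ENNReal.ofReal (r ^ β)
                      = ENNReal.ofReal (((1:ℝ)/2^k) ^ β)
                        * ENNReal.ofReal ((r * 2^k) ^ β) := by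
                    rw [← ENNReal.ofReal_mul (by positivity),
                      ← Real.mul_rpow (by positivity) (by positivity)]
                    congr 2
                    field_simp
                  rw [h1, mul_assoc]
                  refine mul_le_mul_right ?_ _
                  exact le_trans (mul_le_mul_right (measure_mono hsub) _)
                    (hA _ (by positivity) hs)
                · have hb0 : ℓ (B k) = 0 := by
                    refine measure_mono_null (t := ∅) ?_ measure_empty
                    rintro x ⟨hx1, hx2⟩
                    exact absurd (lt_of_lt_of_le (lt_of_le_of_lt hs hx1)
                      (hx2.trans (min_le_left _ _))) (lt_irrefl (1:ℝ))
                  rw [hb0, mul_zero]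
                  exact zero_le
              calc ENNReal.ofReal (r ^ β) * ∫⁻ x in B k, f r x ∂ℓ
                  ≤ ENNReal.ofReal (r ^ β)
                    * (ENNReal.ofReal (((2:ℝ)^(k+1)) ^ (η+1)) * ℓ (B k)) :=
                  mul_le_mul_right hint _
                _ = ENNReal.ofReal (((2:ℝ)^(k+1)) ^ (η+1))
                    * (ENNReal.ofReal (r ^ β) * ℓ (B k)) := by ring
                _ ≤ ENNReal.ofReal (((2:ℝ)^(k+1)) ^ (η+1))
                    * (ENNReal.ofReal (((1:ℝ)/2^k) ^ β) * M) :=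
                  mul_le_mul_right hmeas _
                _ = ENNReal.ofReal (((2:ℝ)^(k+1)) ^ (η+1) * ((1:ℝ)/2^k) ^ β) * M := by
                  rw [ENNReal.ofReal_mul (by positivity), mul_assoc]
    -- the part 0 < |x| ≤ r
    have hApart : ∃ C ≠ (⊤ : ENNReal), ∀ r : ℝ, 0 < r → r ≤ 1 →
        ENNReal.ofReal (r ^ β) * ∫⁻ x in {x : ℝ | 0 < |x| ∧ |x| ≤ r}, f r x ∂ℓ ≤ C := by
      rcases hβ2.lt_or_eq with hlt | heq
      · -- β < 2 : geometric series argument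
        refine ⟨∑' k : ℕ, ENNReal.ofReal (((1:ℝ)/2^k)^2 * ((2:ℝ)^(k+1)) ^ β) * M, ?_, ?_⟩
        · have hrw : ∀ k : ℕ,
              ENNReal.ofReal (((1:ℝ)/2^k)^2 * ((2:ℝ)^(k+1)) ^ β) * M
                = (ENNReal.ofReal ((2:ℝ) ^ (β - 2)))^k
                    * (ENNReal.ofReal ((2:ℝ) ^ β) * M) := by
            intro k
            rw [stmt11_rpow1 β k, ENNReal.ofReal_mul (by positivity),
              ENNReal.ofReal_pow (by positivity), mul_assoc]
          rw [tsum_congr hrw, ENNReal.tsum_mul_right, ENNReal.tsum_geometric]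
          refine (ENNReal.mul_lt_top (ENNReal.inv_lt_top.2 ?_)
            (ENNReal.mul_lt_top ENNReal.ofReal_lt_top hM)).ne
          refine tsub_pos_iff_lt.2 (ENNReal.ofReal_lt_one.2 ?_)
          exact Real.rpow_lt_one_of_one_lt_of_neg one_lt_two (by linarith)
        · intro r hr0 hr1
          set A : ℕ → Set ℝ :=
            fun k => {x : ℝ | r / 2^(k+1) < |x| ∧ |x| ≤ r / 2^k} with hAdef
          have hAsub : {x : ℝ | 0 < |x| ∧ |x| ≤ r} ⊆ ⋃ k, A k := by
            rintro x ⟨hx0, hxr⟩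
            have hex : ∃ k : ℕ, r / 2^(k+1) < |x| := by
              obtain ⟨n, hn⟩ := pow_unbounded_of_one_lt (r / |x|) one_lt_two
              rw [div_lt_iff₀ hx0] at hn
              refine ⟨n, ?_⟩
              rw [div_lt_iff₀ (by positivity)]
              nlinarith [pow_pos (two_pos (α := ℝ)) n, abs_nonneg x, pow_succ (2:ℝ) n]
            refine Set.mem_iUnion.2 ⟨Nat.find hex, Nat.find_spec hex, ?_⟩
            rcases Nat.eq_zero_or_pos (Nat.find hex) with h0 | hpos
            · rw [h0]; simpa using hxr
            · have hmin := Nat.find_min hex (Nat.sub_lt hpos one_pos)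
              push_neg at hmin
              have he : Nat.find hex - 1 + 1 = Nat.find hex := by omega
              rwa [he] at hmin
          have step1 : ∫⁻ x in {x : ℝ | 0 < |x| ∧ |x| ≤ r}, f r x ∂ℓ
              ≤ ∑' k : ℕ, ∫⁻ x in A k, f r x ∂ℓ :=
            (lintegral_mono_set hAsub).trans (lintegral_iUnion_le _ _)
          calc ENNReal.ofReal (r ^ β) * ∫⁻ x in {x : ℝ | 0 < |x| ∧ |x| ≤ r}, f r x ∂ℓ
              ≤ ENNReal.ofReal (r ^ β) * ∑' k : ℕ, ∫⁻ x in A k, f r x ∂ℓ :=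
                mul_le_mul_right step1 _
            _ = ∑' k : ℕ, ENNReal.ofReal (r ^ β) * ∫⁻ x in A k, f r x ∂ℓ :=
                ENNReal.tsum_mul_left.symm
            _ ≤ ∑' k : ℕ, ENNReal.ofReal (((1:ℝ)/2^k)^2 * ((2:ℝ)^(k+1)) ^ β) * M := by
                refine Summable.tsum_le_tsum (fun k => ?_) ENNReal.summable ENNReal.summable
                have hint : ∫⁻ x in A k, f r x ∂ℓ
                    ≤ ENNReal.ofReal (((1:ℝ)/2^k)^2) * ℓ (A k) := by
                  rw [← setLIntegral_const (A k)]
                  refine setLIntegral_mono' (stmt11_ms _ _) ?_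
                  rintro x ⟨hx1, hx2⟩
                  refine ENNReal.ofReal_le_ofReal ((min_le_left _ _).trans ?_)
                  have hxr : |x / r| ≤ 1/2^k := by
                    rw [abs_div, abs_of_pos hr0,
                      div_le_div_iff₀ hr0 (pow_pos two_pos k)]
                    rw [le_div_iff₀ (pow_pos two_pos k)] at hx2
                    linarith
                  exact pow_le_pow_left₀ (abs_nonneg _) hxr 2
                have hmeas : ENNReal.ofReal (r ^ β) * ℓ (A k)
                    ≤ ENNReal.ofReal (((2:ℝ)^(k+1)) ^ β) * M := by
                  have hs0 : (0:ℝ) < r / 2^(k+1) := by positivity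
                  have hs1 : r / 2^(k+1) < 1 := by
                    rw [div_lt_one (by positivity)]
                    have : (1:ℝ) < 2^(k+1) := one_lt_pow₀ (one_lt_two (α := ℝ)) (Nat.succ_ne_zero k)
                    linarith
                  have hsub : A k ⊆ {x : ℝ | r / 2^(k+1) < |x| ∧ |x| ≤ 1} := by
                    rintro x ⟨h1, h2⟩
                    refine ⟨h1, h2.trans ?_⟩
                    rw [div_le_one (by positivity)]
                    have : (1:ℝ) ≤ 2^k := one_le_pow₀ (one_le_two (α := ℝ))
                    linarith
                  have h1 : ENNReal.ofReal (r ^ β)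
                      = ENNReal.ofReal (((2:ℝ)^(k+1)) ^ β)
                        * ENNReal.ofReal ((r / 2^(k+1)) ^ β) := by
                    rw [← ENNReal.ofReal_mul (by positivity),
                      ← Real.mul_rpow (by positivity) (by positivity)]
                    congr 2
                    field_simp
                  rw [h1, mul_assoc]
                  refine mul_le_mul_right ?_ _
                  exact le_trans (mul_le_mul_right (measure_mono hsub) _) (hA _ hs0 hs1)
                calc ENNReal.ofReal (r ^ β) * ∫⁻ x in A k, f r x ∂ℓ
                    ≤ ENNReal.ofReal (r ^ β)
                      * (ENNReal.ofReal (((1:ℝ)/2^k)^2) * ℓ (A k)) :=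
                    mul_le_mul_right hint _
                  _ = ENNReal.ofReal (((1:ℝ)/2^k)^2)
                      * (ENNReal.ofReal (r ^ β) * ℓ (A k)) := by ring
                  _ ≤ ENNReal.ofReal (((1:ℝ)/2^k)^2)
                      * (ENNReal.ofReal (((2:ℝ)^(k+1)) ^ β) * M) :=
                    mul_le_mul_right hmeas _
                  _ = ENNReal.ofReal (((1:ℝ)/2^k)^2 * ((2:ℝ)^(k+1)) ^ β) * M := by
                    rw [ENNReal.ofReal_mul (by positivity), mul_assoc]
      · -- β = 2 : use the Lévy integrability directly
        subst heq
        refine ⟨∫⁻ x, ENNReal.ofReal (min (x ^ 2) 1) ∂ℓ, hℓlevy, ?_⟩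
        intro r hr0 hr1
        have hconst : (ENNReal.ofReal (r ^ (2:ℝ)) : ENNReal) ≠ ⊤ := ENNReal.ofReal_ne_top
        rw [← lintegral_const_mul' _ _ hconst]
        calc ∫⁻ x in {x : ℝ | 0 < |x| ∧ |x| ≤ r},
              ENNReal.ofReal (r ^ (2:ℝ)) * f r x ∂ℓ
            ≤ ∫⁻ x in {x : ℝ | 0 < |x| ∧ |x| ≤ r},
              ENNReal.ofReal (min (x ^ 2) 1) ∂ℓ := by
              refine setLIntegral_mono' (stmt11_ms _ _) ?_
              rintro x ⟨hx0, hxr⟩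
              rw [hfdef]
              simp only
              rw [← ENNReal.ofReal_mul (by positivity)]
              refine ENNReal.ofReal_le_ofReal ?_
              have hx1 : x^2 ≤ 1 := by nlinarith [sq_abs x, abs_nonneg x]
              have hrr : r ^ (2:ℝ) = r^2 := Real.rpow_two r
              have hkey : r ^ (2:ℝ) * min (|x / r| ^ 2) (|x / r| ^ (η + 1)) ≤ x^2 := by
                rw [hrr]
                calc r^2 * min (|x / r| ^ 2) (|x / r| ^ (η + 1))
                    ≤ r^2 * |x / r| ^ 2 :=
                      mul_le_mul_of_nonneg_left (min_le_left _ _) (by positivity)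
                  _ = x^2 := by
                      rw [sq_abs, div_pow]
                      field_simp
              rw [min_eq_left hx1]
              exact hkey
          _ ≤ ∫⁻ x, ENNReal.ofReal (min (x ^ 2) 1) ∂ℓ := setLIntegral_le_lintegral _ _
    obtain ⟨CA, hCAne, hCA⟩ := hApart
    obtain ⟨CB, hCBne, hCB⟩ := hBpart
    refine lt_of_le_of_lt (iSup_le ?_) (ENNReal.add_lt_top.2 ⟨hCAne.lt_top, hCBne.lt_top⟩)
    rintro ⟨r, hr0, hr1⟩
    show ENNReal.ofReal (r ^ β) * ∫⁻ x in {x : ℝ | |x| ≤ 1}, f r x ∂ℓ ≤ CA + CB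
    have hcov : {x : ℝ | |x| ≤ 1} ⊆
        {(0:ℝ)} ∪ ({x : ℝ | 0 < |x| ∧ |x| ≤ r} ∪ {x : ℝ | r < |x| ∧ |x| ≤ 1}) := by
      intro x hx
      rcases eq_or_ne x 0 with h | h
      · exact Or.inl h
      · have hx0 : 0 < |x| := abs_pos.2 h
        rcases le_or_gt (|x|) r with h2 | h2
        · exact Or.inr (Or.inl ⟨hx0, h2⟩)
        · exact Or.inr (Or.inr ⟨h2, hx⟩)
    have hsplit : ∫⁻ x in {x : ℝ | |x| ≤ 1}, f r x ∂ℓ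
        ≤ ∫⁻ x in {x : ℝ | 0 < |x| ∧ |x| ≤ r}, f r x ∂ℓ
          + ∫⁻ x in {x : ℝ | r < |x| ∧ |x| ≤ 1}, f r x ∂ℓ := by
      refine le_trans (lintegral_mono_set hcov) ?_
      refine le_trans (lintegral_union_le _ _ _) ?_
      rw [setLIntegral_measure_zero _ _ hℓ0, zero_add]
      exact lintegral_union_le _ _ _
    calc ENNReal.ofReal (r ^ β) * ∫⁻ x in {x : ℝ | |x| ≤ 1}, f r x ∂ℓ
        ≤ ENNReal.ofReal (r ^ β)
          * (∫⁻ x in {x : ℝ | 0 < |x| ∧ |x| ≤ r}, f r x ∂ℓ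
            + ∫⁻ x in {x : ℝ | r < |x| ∧ |x| ≤ 1}, f r x ∂ℓ) :=
          mul_le_mul_right hsplit _
      _ = ENNReal.ofReal (r ^ β) * ∫⁻ x in {x : ℝ | 0 < |x| ∧ |x| ≤ r}, f r x ∂ℓ
          + ENNReal.ofReal (r ^ β) * ∫⁻ x in {x : ℝ | r < |x| ∧ |x| ≤ 1}, f r x ∂ℓ :=
          mul_add _ _ _
      _ ≤ CA + CB := add_le_add (hCA r hr0 hr1) (hCB r hr0 hr1)
  · -- easy direction
    intro hS
    refine lt_of_le_of_lt (iSup_le ?_) hS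
    rintro ⟨r, hr0, hr1⟩
    show ENNReal.ofReal (r ^ β) * ℓ {x : ℝ | r < |x| ∧ |x| ≤ 1}
        ≤ ⨆ r : Set.Ioc (0 : ℝ) 1,
            ENNReal.ofReal (r.1 ^ β) * ∫⁻ x in {x : ℝ | |x| ≤ 1}, f r.1 x ∂ℓ
    have key : ℓ {x : ℝ | r < |x| ∧ |x| ≤ 1}
        ≤ ∫⁻ x in {x : ℝ | |x| ≤ 1}, f r x ∂ℓ := by
      rw [← setLIntegral_one]
      refine le_trans (setLIntegral_mono' (stmt11_ms _ _) ?_)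
        (lintegral_mono_set (fun x hx => hx.2))
      rintro x ⟨hx1, hx2⟩
      have h1 : (1:ℝ) ≤ |x / r| := by
        rw [abs_div, abs_of_pos hr0, le_div_iff₀ hr0]
        linarith
      refine ENNReal.one_le_ofReal.2 (le_min ?_ (Real.one_le_rpow h1 (by linarith)))
      nlinarith
    exact le_trans (mul_le_mul_right key _)
      (le_iSup (fun r : Set.Ioc (0:ℝ) 1 =>
        ENNReal.ofReal (r.1 ^ β) * ∫⁻ x in {x : ℝ | |x| ≤ 1}, f r.1 x ∂ℓ)
        ⟨r, hr0, hr1.le⟩)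
end

section
/- Let β = 1 + η with η ∈ [0,1), and let ℓ be a Lévy measure on ℝ satisfying sup_{r∈(0,1)} r^β ℓ({x : r < |x| ≤ 1}) ≤ c < ∞. Then there is a constant c_β > 0 depending only on β such that for all r ∈ (0,1]: r^β ∫_{|x| ≤ 1} (|x/r|² ∧ |x/r|^β) dℓ(x) ≤ c_β · c · max{1, log₂(1/r)}. -/
open MeasureTheory
open scoped ENNReal

theorem stmt_12 (η : ℝ) (hη : η ∈ Set.Ico (0 : ℝ) 1) :
    ∃ cβ : ℝ, 0 < cβ ∧
      ∀ (ℓ : Measure ℝ), ℓ {(0 : ℝ)} = 0 →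
        (∫⁻ x, ENNReal.ofReal (min (x ^ 2) 1) ∂ℓ ≠ ⊤) →
        ∀ c : ℝ, 0 ≤ c →
        (∀ r : ℝ, r ∈ Set.Ioo (0 : ℝ) 1 →
          ENNReal.ofReal (r ^ (1 + η)) * ℓ {x : ℝ | r < |x| ∧ |x| ≤ 1}
            ≤ ENNReal.ofReal c) →
        ∀ r : ℝ, r ∈ Set.Ioc (0 : ℝ) 1 →
          ENNReal.ofReal (r ^ (1 + η)) *
            ∫⁻ x in {x : ℝ | |x| ≤ 1},
              ENNReal.ofReal (min (|x / r| ^ 2) (|x / r| ^ (1 + η))) ∂ℓ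
            ≤ ENNReal.ofReal (cβ * c * max 1 (Real.logb 2 (1 / r))) := by
  obtain ⟨hη0, hη1⟩ := hη
  set q : ℝ := (2 : ℝ) ^ (η - 1) with hq_def
  have hq0 : 0 < q := Real.rpow_pos_of_pos two_pos _
  have hq1 : q < 1 := Real.rpow_lt_one_of_one_lt_of_neg one_lt_two (by linarith)
  have h1q : 0 < 1 - q := by linarith
  refine ⟨4 * (3 + (1 - q)⁻¹), by positivity, ?_⟩
  intro ℓ hℓ0 _hint c hc hyp r hr
  obtain ⟨hr0, hr1⟩ := hr
  have hβ0 : (0:ℝ) < 1 + η := by linarith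
  -- the shells
  set S : ℕ → Set ℝ := fun k => {x : ℝ | ((2:ℝ) ^ (k+1))⁻¹ < |x| ∧ |x| ≤ ((2:ℝ) ^ k)⁻¹}
    with hS_def
  have cover : {x : ℝ | |x| ≤ 1} ⊆ {(0:ℝ)} ∪ ⋃ k, S k := by
    intro x hx
    by_cases hx0 : x = 0
    · exact Or.inl hx0
    · right
      have ht0 : 0 < |x| := abs_pos.mpr hx0
      have hP : ∃ n : ℕ, ((2:ℝ) ^ (n+1))⁻¹ < |x| := by
        obtain ⟨n, hn⟩ := exists_pow_lt_of_lt_one ht0 (by norm_num : (2:ℝ)⁻¹ < 1)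
        refine ⟨n, lt_of_le_of_lt ?_ hn⟩
        rw [← inv_pow]
        exact pow_le_pow_of_le_one (by norm_num) (by norm_num) (Nat.le_succ n)
      classical
      refine Set.mem_iUnion.mpr ⟨Nat.find hP, Nat.find_spec hP, ?_⟩
      rcases Nat.eq_zero_or_pos (Nat.find hP) with h0 | hpos
      · rw [h0]; simpa using hx
      · obtain ⟨m, hm⟩ := Nat.exists_eq_succ_of_ne_zero hpos.ne'
        rw [hm]
        have := Nat.find_min hP (by omega : m < Nat.find hP)
        push_neg at this
        exact this
  have hSm : ∀ k, MeasurableSet (S k) := by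
    intro k
    have : S k = (fun x : ℝ => |x|) ⁻¹' Set.Ioc (((2:ℝ) ^ (k+1))⁻¹) (((2:ℝ) ^ k)⁻¹) := rfl
    rw [this]
    exact measurable_abs measurableSet_Ioc
  -- per-shell constant bound for the integrand
  set m : ℕ → ℝ := fun k => min ((((2:ℝ) ^ k)⁻¹ / r) ^ 2) ((((2:ℝ) ^ k)⁻¹ / r) ^ (1 + η))
    with hm_def
  have hm0 : ∀ k, 0 ≤ m k := by
    intro k
    exact le_min (by positivity) (Real.rpow_nonneg (by positivity) _)
  have hmle : ∀ k, ∀ x ∈ S k,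
      ENNReal.ofReal (min (|x / r| ^ 2) (|x / r| ^ (1 + η))) ≤ ENNReal.ofReal (m k) := by
    intro k x hx
    apply ENNReal.ofReal_le_ofReal
    have h1 : |x / r| ≤ ((2:ℝ) ^ k)⁻¹ / r := by
      rw [abs_div, abs_of_pos hr0]
      gcongr
      exact hx.2
    simp only [hm_def]
    exact min_le_min (pow_le_pow_left₀ (abs_nonneg _) h1 2)
      (Real.rpow_le_rpow (abs_nonneg _) h1 hβ0.le)
  -- measure of shells
  have hμS : ∀ k, ℓ (S k) ≤ ENNReal.ofReal (c * ((2:ℝ) ^ (k+1)) ^ (1 + η)) := by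
    intro k
    set ρ : ℝ := ((2:ℝ) ^ (k+1))⁻¹ with hρ_def
    have hρ0 : 0 < ρ := by positivity
    have hρ1 : ρ < 1 := by
      rw [hρ_def]
      rw [inv_lt_one_iff₀]
      right
      exact one_lt_pow₀ one_lt_two (Nat.succ_ne_zero k)
    have hρβ : 0 < ρ ^ (1+η) := Real.rpow_pos_of_pos hρ0 _
    have hsub : S k ⊆ {x : ℝ | ρ < |x| ∧ |x| ≤ 1} := by
      intro x hx
      refine ⟨hx.1, hx.2.trans ?_⟩
      rw [inv_le_one_iff₀]
      right
      exact one_le_pow₀ one_le_two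
    have h := hyp ρ ⟨hρ0, hρ1⟩
    calc ℓ (S k) ≤ ℓ {x : ℝ | ρ < |x| ∧ |x| ≤ 1} := measure_mono hsub
      _ ≤ ENNReal.ofReal c / ENNReal.ofReal (ρ ^ (1+η)) := by
          rw [ENNReal.le_div_iff_mul_le (Or.inl (ENNReal.ofReal_pos.mpr hρβ).ne')
            (Or.inl ENNReal.ofReal_ne_top)]
          rw [mul_comm]; exact h
      _ = ENNReal.ofReal (c / ρ ^ (1+η)) := (ENNReal.ofReal_div_of_pos hρβ).symm
      _ = ENNReal.ofReal (c * ((2:ℝ) ^ (k+1)) ^ (1 + η)) := by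
          congr 1
          rw [hρ_def, Real.inv_rpow (by positivity), div_inv_eq_mul]
  -- per-shell integral bound
  have hintS : ∀ k, (∫⁻ x in S k,
      ENNReal.ofReal (min (|x / r| ^ 2) (|x / r| ^ (1 + η))) ∂ℓ)
      ≤ ENNReal.ofReal (m k) * ENNReal.ofReal (c * ((2:ℝ) ^ (k+1)) ^ (1 + η)) := by
    intro k
    calc ∫⁻ x in S k, ENNReal.ofReal (min (|x / r| ^ 2) (|x / r| ^ (1 + η))) ∂ℓ
        ≤ ∫⁻ _ in S k, ENNReal.ofReal (m k) ∂ℓ :=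
          setLIntegral_mono measurable_const (hmle k)
      _ = ENNReal.ofReal (m k) * ℓ (S k) := setLIntegral_const _ _
      _ ≤ _ := mul_le_mul_right (hμS k) _
  -- the main splitting
  have step1 : (∫⁻ x in {x : ℝ | |x| ≤ 1},
      ENNReal.ofReal (min (|x / r| ^ 2) (|x / r| ^ (1 + η))) ∂ℓ)
      ≤ ∑' k, ENNReal.ofReal (m k) * ENNReal.ofReal (c * ((2:ℝ) ^ (k+1)) ^ (1 + η)) := by
    calc (∫⁻ x in {x : ℝ | |x| ≤ 1},
          ENNReal.ofReal (min (|x / r| ^ 2) (|x / r| ^ (1 + η))) ∂ℓ)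
        ≤ ∫⁻ x in {(0:ℝ)} ∪ ⋃ k, S k,
            ENNReal.ofReal (min (|x / r| ^ 2) (|x / r| ^ (1 + η))) ∂ℓ :=
          lintegral_mono_set cover
      _ ≤ (∫⁻ x in {(0:ℝ)},
            ENNReal.ofReal (min (|x / r| ^ 2) (|x / r| ^ (1 + η))) ∂ℓ)
          + ∫⁻ x in ⋃ k, S k,
            ENNReal.ofReal (min (|x / r| ^ 2) (|x / r| ^ (1 + η))) ∂ℓ :=
          lintegral_union_le _ _ _
      _ = ∫⁻ x in ⋃ k, S k,
            ENNReal.ofReal (min (|x / r| ^ 2) (|x / r| ^ (1 + η))) ∂ℓ := by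
          rw [setLIntegral_measure_zero _ _ hℓ0, zero_add]
      _ ≤ ∑' k, ∫⁻ x in S k,
            ENNReal.ofReal (min (|x / r| ^ 2) (|x / r| ^ (1 + η))) ∂ℓ :=
          lintegral_iUnion_le _ _
      _ ≤ _ := ENNReal.tsum_le_tsum hintS
  -- the real-valued per-shell weight
  set w : ℕ → ℝ := fun k => min ((r * 2 ^ k) ^ (η - 1)) 1 with hw_def
  have hw0 : ∀ k, 0 ≤ w k := by
    intro k
    exact le_min (Real.rpow_nonneg (by positivity) _) zero_le_one
  -- key pointwise bound
  have hvw : ∀ k, r ^ (1 + η) * (m k * (c * ((2:ℝ) ^ (k+1)) ^ (1 + η)))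
      ≤ 4 * c * w k := by
    intro k
    simp only [hm_def, hw_def]
    set A : ℝ := (2:ℝ) ^ k with hA_def
    have hA : 0 < A := by positivity
    have hrA : 0 < r * A := by positivity
    have h2β : (2:ℝ) ^ ((1:ℝ)+η) ≤ 4 := by
      calc (2:ℝ) ^ ((1:ℝ)+η) ≤ (2:ℝ) ^ (2:ℝ) :=
            Real.rpow_le_rpow_of_exponent_le one_le_two (by linarith)
        _ = 4 := by
            rw [show (2:ℝ) = ((2:ℕ):ℝ) by norm_num, Real.rpow_natCast]
            norm_num
    have h2b : ((2:ℝ) ^ (k+1)) ^ (1+η) ≤ 4 * A ^ (1+η) := by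
      have he : ((2:ℝ) ^ (k+1)) ^ (1+η) = A ^ (1+η) * (2:ℝ) ^ ((1:ℝ)+η) := by
        rw [pow_succ, Real.mul_rpow (by positivity) (by norm_num)]
      rw [he]
      calc A ^ (1+η) * (2:ℝ) ^ ((1:ℝ)+η) ≤ A ^ (1+η) * 4 :=
            mul_le_mul_of_nonneg_left h2β (Real.rpow_nonneg hA.le _)
        _ = 4 * A ^ (1+η) := mul_comm _ _
    have ha : r ^ (1+η) * min ((A⁻¹ / r) ^ 2) ((A⁻¹ / r) ^ (1+η)) * A ^ (1+η) ≤ 1 := by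
      have h1 : min ((A⁻¹ / r) ^ 2) ((A⁻¹ / r) ^ (1+η)) ≤ (A⁻¹ / r) ^ (1+η) :=
        min_le_right _ _
      have heq : r ^ (1+η) * ((A⁻¹ / r) ^ (1+η)) * A ^ (1+η) = 1 := by
        rw [Real.div_rpow (by positivity) hr0.le, Real.inv_rpow hA.le]
        have h2 := Real.rpow_pos_of_pos hr0 (1+η)
        have h3 := Real.rpow_pos_of_pos hA (1+η)
        field_simp [h2.ne', h3.ne']
      calc r ^ (1+η) * min ((A⁻¹ / r) ^ 2) ((A⁻¹ / r) ^ (1+η)) * A ^ (1+η)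
          ≤ r ^ (1+η) * ((A⁻¹ / r) ^ (1+η)) * A ^ (1+η) :=
            mul_le_mul_of_nonneg_right
              (mul_le_mul_of_nonneg_left h1 (Real.rpow_nonneg hr0.le _))
              (Real.rpow_nonneg hA.le _)
        _ = 1 := heq
    have hb : r ^ (1+η) * min ((A⁻¹ / r) ^ 2) ((A⁻¹ / r) ^ (1+η)) * A ^ (1+η)
        ≤ (r * A) ^ (η - 1) := by
      have h1 : min ((A⁻¹ / r) ^ 2) ((A⁻¹ / r) ^ (1+η)) ≤ (A⁻¹ / r) ^ 2 :=
        min_le_left _ _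
      have heq : r ^ (1+η) * ((A⁻¹ / r) ^ 2) * A ^ (1+η) = (r * A) ^ (η - 1) := by
        have h2 : (A⁻¹ / r) ^ 2 = ((r * A) ^ (2:ℕ))⁻¹ := by
          rw [← inv_pow]
          congr 1
          field_simp [hr0.ne', hA.ne']
          rw [hA_def]
          ring
          rw [← mul_pow]; norm_num
        rw [h2, ← Real.rpow_natCast (r*A) 2]
        rw [mul_comm (r ^ (1+η)) _, mul_assoc, ← Real.mul_rpow hr0.le hA.le]
        rw [← Real.rpow_neg hrA.le, ← Real.rpow_add hrA]
        congr 1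
        push_cast
        ring
      calc r ^ (1+η) * min ((A⁻¹ / r) ^ 2) ((A⁻¹ / r) ^ (1+η)) * A ^ (1+η)
          ≤ r ^ (1+η) * ((A⁻¹ / r) ^ 2) * A ^ (1+η) :=
            mul_le_mul_of_nonneg_right
              (mul_le_mul_of_nonneg_left h1 (Real.rpow_nonneg hr0.le _))
              (Real.rpow_nonneg hA.le _)
        _ = (r * A) ^ (η - 1) := heq
    have hmk0 : 0 ≤ min ((A⁻¹ / r) ^ 2) ((A⁻¹ / r) ^ (1+η)) :=
      le_min (by positivity) (Real.rpow_nonneg (by positivity) _)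
    calc r ^ (1 + η) * (min ((A⁻¹ / r) ^ 2) ((A⁻¹ / r) ^ (1 + η))
          * (c * ((2:ℝ) ^ (k+1)) ^ (1 + η)))
        = c * (((2:ℝ) ^ (k+1)) ^ (1+η)
            * (r ^ (1+η) * min ((A⁻¹ / r) ^ 2) ((A⁻¹ / r) ^ (1+η)))) := by ring
      _ ≤ c * ((4 * A ^ (1+η))
            * (r ^ (1+η) * min ((A⁻¹ / r) ^ 2) ((A⁻¹ / r) ^ (1+η)))) := by
          refine mul_le_mul_of_nonneg_left (mul_le_mul_of_nonneg_right h2b ?_) hc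
          exact mul_nonneg (Real.rpow_nonneg hr0.le _) hmk0
      _ = 4 * c * (r ^ (1+η) * min ((A⁻¹ / r) ^ 2) ((A⁻¹ / r) ^ (1+η)) * A ^ (1+η)) := by
          ring
      _ ≤ 4 * c * min ((r * A) ^ (η - 1)) 1 :=
          mul_le_mul_of_nonneg_left (le_min hb ha) (by positivity)
  -- the sum of the weights
  set N : ℕ := ⌈Real.logb 2 (1 / r)⌉₊ with hN_def
  have hlog0 : 0 ≤ Real.logb 2 (1 / r) :=
    Real.logb_nonneg one_lt_two (by rw [le_div_iff₀ hr0]; linarith)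
  have hwq : ∀ j : ℕ, w (j + (N+1)) ≤ q ^ (j+1) := by
    intro j
    simp only [hw_def]
    have hrN : 1 ≤ r * 2 ^ N := by
      have h1 : Real.logb 2 (1/r) ≤ (N:ℝ) := Nat.le_ceil _
      have h2 : (1:ℝ)/r ≤ 2 ^ (N:ℝ) := by
        calc (1:ℝ)/r = 2 ^ Real.logb 2 (1/r) :=
              (Real.rpow_logb two_pos (by norm_num) (by positivity)).symm
          _ ≤ 2 ^ (N:ℝ) := Real.rpow_le_rpow_of_exponent_le one_le_two h1
      rw [Real.rpow_natCast, div_le_iff₀ hr0] at h2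
      nlinarith
    have hge : (2:ℝ) ^ (j+1) ≤ r * 2 ^ (j + (N+1)) := by
      have he : r * (2:ℝ) ^ (j + (N+1)) = (r * 2 ^ N) * 2 ^ (j+1) := by
        rw [show j + (N+1) = N + (j+1) by omega, pow_add]
        ring
      rw [he]
      nlinarith [pow_pos (two_pos : (0:ℝ) < 2) (j+1)]
    have h3 : (r * 2 ^ (j + (N+1))) ^ (η-1) ≤ ((2:ℝ) ^ (j+1)) ^ (η-1) :=
      Real.rpow_le_rpow_of_nonpos (by positivity) hge (by linarith)
    have h4 : ((2:ℝ) ^ (j+1)) ^ (η-1) = q ^ (j+1) := by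
      rw [hq_def, ← Real.rpow_natCast (2:ℝ) (j+1), ← Real.rpow_mul (by norm_num),
        mul_comm (((j+1:ℕ)):ℝ) (η-1), Real.rpow_mul (by norm_num), Real.rpow_natCast]
    exact le_trans (min_le_left _ _) (h4 ▸ h3)
  have sumw : (∑' k, ENNReal.ofReal (w k))
      ≤ ENNReal.ofReal (((N:ℝ) + 1) + (1 - q)⁻¹) := by
    set G1 : ℕ → ℝ≥0∞ := fun k => if k < N+1 then 1 else 0 with hG1
    set G2 : ℕ → ℝ≥0∞ := fun k => if k < N+1 then 0 else (ENNReal.ofReal q)^(k - N)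
      with hG2
    have hpt : ∀ k, ENNReal.ofReal (w k) ≤ G1 k + G2 k := by
      intro k
      by_cases hk : k < N+1
      · simp only [hG1, hG2, if_pos hk]
        rw [add_zero, ENNReal.ofReal_le_one]
        simp only [hw_def]
        exact min_le_right _ _
      · simp only [hG1, hG2, if_neg hk]
        rw [zero_add, ← ENNReal.ofReal_pow hq0.le]
        apply ENNReal.ofReal_le_ofReal
        have h := hwq (k - (N+1))
        rw [show k - (N+1) + (N+1) = k by omega] at h
        rw [show k - (N+1) + 1 = k - N by omega] at h
        exact h
    have hsum1 : ∑' k, G1 k = ((N+1:ℕ) : ℝ≥0∞) := by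
      rw [tsum_eq_sum (s := Finset.range (N+1))
        (fun b hb => by simp only [hG1]; rw [if_neg (by simpa using hb)])]
      rw [Finset.sum_congr rfl
        (fun k hk => by simp only [hG1]; rw [if_pos (Finset.mem_range.mp hk)])]
      simp
    have hsum2 : ∑' k, G2 k ≤ ENNReal.ofReal ((1-q)⁻¹) := by
      have hre : ∑' k, G2 k = ∑' j, (ENNReal.ofReal q)^(j+1) := by
        rw [← Function.Injective.tsum_eq (g := fun j => j + (N+1))
          (add_left_injective _) ?_]
        · refine (tsum_congr fun j => ?_).symm
          simp only [hG2]
          rw [if_neg (by omega)]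
          congr 1
          omega
        · intro k hk
          simp only [Function.mem_support, hG2] at hk
          by_cases hklt : k < N+1
          · rw [if_pos hklt] at hk; exact absurd rfl hk
          · exact ⟨k - (N+1), by show k - (N+1) + (N+1) = k; omega⟩
      rw [hre]
      calc (∑' j, (ENNReal.ofReal q) ^ (j+1))
          = ENNReal.ofReal q * ∑' j, (ENNReal.ofReal q) ^ j := by
            simp only [pow_succ']
            rw [ENNReal.tsum_mul_left]
        _ = ENNReal.ofReal q * (1 - ENNReal.ofReal q)⁻¹ := by rw [ENNReal.tsum_geometric]
        _ ≤ 1 * (1 - ENNReal.ofReal q)⁻¹ :=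
            mul_le_mul_left (ENNReal.ofReal_le_one.mpr hq1.le) _
        _ = (1 - ENNReal.ofReal q)⁻¹ := one_mul _
        _ = ENNReal.ofReal ((1-q)⁻¹) := by
            rw [ENNReal.ofReal_inv_of_pos h1q, ENNReal.ofReal_sub _ hq0.le,
              ENNReal.ofReal_one]
    calc ∑' k, ENNReal.ofReal (w k)
        ≤ ∑' k, (G1 k + G2 k) := ENNReal.tsum_le_tsum hpt
      _ = (∑' k, G1 k) + ∑' k, G2 k := ENNReal.tsum_add
      _ ≤ ((N+1:ℕ) : ℝ≥0∞) + ENNReal.ofReal ((1-q)⁻¹) := by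
          rw [hsum1]; exact add_le_add le_rfl hsum2
      _ = ENNReal.ofReal (((N:ℝ) + 1) + (1 - q)⁻¹) := by
          rw [ENNReal.ofReal_add (by positivity) (by positivity),
            ← ENNReal.ofReal_natCast (N+1)]
          congr 1
          push_cast
          ring
  -- final numeric bound
  set L : ℝ := max 1 (Real.logb 2 (1 / r)) with hL_def
  have hL1 : (1:ℝ) ≤ L := le_max_left _ _
  have hlogL : Real.logb 2 (1 / r) ≤ L := le_max_right _ _
  have hNle : (N:ℝ) ≤ Real.logb 2 (1 / r) + 1 := (Nat.ceil_lt_add_one hlog0).le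
  have hfinal : 4 * c * (((N:ℝ) + 1) + (1 - q)⁻¹) ≤ 4 * (3 + (1 - q)⁻¹) * c * L := by
    have hinv : 0 ≤ (1 - q)⁻¹ := by positivity
    have h1 : ((N:ℝ) + 1) + (1 - q)⁻¹ ≤ (3 + (1 - q)⁻¹) * L := by
      nlinarith [mul_le_mul_of_nonneg_left hL1 hinv]
    calc 4 * c * (((N:ℝ) + 1) + (1 - q)⁻¹) ≤ 4 * c * ((3 + (1 - q)⁻¹) * L) :=
          mul_le_mul_of_nonneg_left h1 (by positivity)
      _ = 4 * (3 + (1 - q)⁻¹) * c * L := by ring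
  -- put everything together
  calc ENNReal.ofReal (r ^ (1 + η)) *
        ∫⁻ x in {x : ℝ | |x| ≤ 1},
          ENNReal.ofReal (min (|x / r| ^ 2) (|x / r| ^ (1 + η))) ∂ℓ
      ≤ ENNReal.ofReal (r ^ (1 + η)) *
        ∑' k, ENNReal.ofReal (m k) * ENNReal.ofReal (c * ((2:ℝ) ^ (k+1)) ^ (1 + η)) :=
        mul_le_mul_right step1 _
    _ = ∑' k, ENNReal.ofReal (r ^ (1 + η) * (m k * (c * ((2:ℝ) ^ (k+1)) ^ (1 + η)))) := by
        rw [← ENNReal.tsum_mul_left]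
        refine tsum_congr fun k => ?_
        rw [ENNReal.ofReal_mul (Real.rpow_nonneg hr0.le _), ENNReal.ofReal_mul (hm0 k)]
    _ ≤ ∑' k, ENNReal.ofReal (4 * c * w k) :=
        ENNReal.tsum_le_tsum fun k => ENNReal.ofReal_le_ofReal (hvw k)
    _ = ENNReal.ofReal (4 * c) * ∑' k, ENNReal.ofReal (w k) := by
        rw [← ENNReal.tsum_mul_left]
        refine tsum_congr fun k => ?_
        rw [ENNReal.ofReal_mul (by positivity : (0:ℝ) ≤ 4 * c)]
    _ ≤ ENNReal.ofReal (4 * c) * ENNReal.ofReal (((N:ℝ) + 1) + (1 - q)⁻¹) :=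
        mul_le_mul_right sumw _
    _ = ENNReal.ofReal (4 * c * (((N:ℝ) + 1) + (1 - q)⁻¹)) := by
        rw [← ENNReal.ofReal_mul (by positivity)]
    _ ≤ ENNReal.ofReal (4 * (3 + (1 - q)⁻¹) * c * L) := ENNReal.ofReal_le_ofReal hfinal
end

section
/- Let σ > 0, t > 0, and let Y = σW + J where σW is a centered Gaussian of variance σ²t (density p^{σW}_t) and J is an independent random variable, so Y has density p_t = p^{σW}_t * P_J which is C¹. Suppose E[e^{2Y}] < ∞. Then ∫_ℝ |e^x − 1| |p_t'(x)| dx ≤ (1/(σ√t)) · ‖e^Y − 1‖_{L₂(P)}. -/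
open MeasureTheory Real Filter Topology
open scoped ENNReal

/-- The Gaussian density of variance `σ² t`. -/
noncomputable def gaussDens (σ t x : ℝ) : ℝ :=
  Real.exp (-(x ^ 2) / (2 * σ ^ 2 * t)) / Real.sqrt (2 * Real.pi * σ ^ 2 * t)

/-- The density of `Y = σW_t + J`: convolution of the Gaussian density with the law of `J`. -/
noncomputable def convDens (σ t : ℝ) (νJ : Measure ℝ) (x : ℝ) : ℝ :=
  ∫ y, gaussDens σ t (x - y) ∂νJ


lemma gd_nonneg (σ t x : ℝ) : 0 ≤ gaussDens σ t x :=
  div_nonneg (Real.exp_pos _).le (Real.sqrt_nonneg _)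

lemma gd_cont (σ t : ℝ) : Continuous (gaussDens σ t) := by
  unfold gaussDens; fun_prop

lemma hv_pos {σ t : ℝ} (hσ : 0 < σ) (ht : 0 < t) : 0 < σ ^ 2 * t := mul_pos (pow_pos hσ 2) ht

lemma gd_le {σ t : ℝ} (hσ : 0 < σ) (ht : 0 < t) (x : ℝ) : gaussDens σ t x ≤ (Real.sqrt (2 * Real.pi * σ ^ 2 * t))⁻¹ := by
  rw [gaussDens, div_eq_mul_inv]
  have h2 : Real.exp (-(x ^ 2) / (2 * σ ^ 2 * t)) ≤ 1 := by
    rw [Real.exp_le_one_iff]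
    have hv := hv_pos hσ ht
    apply div_nonpos_of_nonpos_of_nonneg (neg_nonpos.2 (sq_nonneg x)) (by nlinarith)
  have : (0:ℝ) ≤ (Real.sqrt (2 * Real.pi * σ ^ 2 * t))⁻¹ := by positivity
  nlinarith

/-- `u ≤ exp (u^2)` for `0 ≤ u`. -/
lemma le_exp_sq {u : ℝ} (hu : 0 ≤ u) : u ≤ Real.exp (u ^ 2) := by
  have := Real.add_one_le_exp (u ^ 2)
  nlinarith

/-- `|x| * exp (-(x^2)/(2v)) ≤ sqrt (2v)` for `v > 0`. -/
lemma abs_mul_exp_le {v : ℝ} (hv : 0 < v) (x : ℝ) :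
    |x| * Real.exp (-(x ^ 2) / (2 * v)) ≤ Real.sqrt (2 * v) := by
  have h2v : 0 < 2 * v := by linarith
  have hu : 0 ≤ |x| / Real.sqrt (2 * v) := by positivity
  have hsq : (|x| / Real.sqrt (2 * v)) ^ 2 = x ^ 2 / (2 * v) := by
    rw [div_pow, sq_abs, Real.sq_sqrt h2v.le]
  have h := le_exp_sq hu
  rw [hsq] at h
  have hs : 0 < Real.sqrt (2 * v) := Real.sqrt_pos.2 h2v
  rw [div_le_iff₀ hs] at h
  calc |x| * Real.exp (-(x ^ 2) / (2 * v))
      ≤ (Real.exp (x ^ 2 / (2 * v)) * Real.sqrt (2 * v)) * Real.exp (-(x ^ 2) / (2 * v)) := by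
        apply mul_le_mul_of_nonneg_right h (Real.exp_pos _).le
    _ = Real.sqrt (2 * v) := by
        rw [mul_comm (Real.exp _), mul_assoc, ← Real.exp_add]
        simp [neg_div]

lemma gd_abs_mul_le {σ t : ℝ} (hσ : 0 < σ) (ht : 0 < t) (x : ℝ) :
    |x| * gaussDens σ t x ≤
      Real.sqrt (2 * σ ^ 2 * t) * (Real.sqrt (2 * Real.pi * σ ^ 2 * t))⁻¹ := by
  rw [gaussDens, div_eq_mul_inv, ← mul_assoc]
  apply mul_le_mul_of_nonneg_right _ (by positivity)
  have := abs_mul_exp_le (hv_pos hσ ht) x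
  rw [show 2 * (σ ^ 2 * t) = 2 * σ ^ 2 * t by ring] at this
  exact this

/-- derivative of the gaussian density -/
lemma gd_hasDerivAt {σ t : ℝ} (hσ : 0 < σ) (ht : 0 < t) (x : ℝ) :
    HasDerivAt (gaussDens σ t) (-(x / (σ ^ 2 * t)) * gaussDens σ t x) x := by
  have hv := hv_pos hσ ht
  have h1 : HasDerivAt (fun x : ℝ => -(x ^ 2) / (2 * σ ^ 2 * t))
      (-(2 * x) / (2 * σ ^ 2 * t)) x := by
    simpa [neg_div] using (((hasDerivAt_pow 2 x).neg).div_const (2 * σ ^ 2 * t))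
  have h2 := (h1.exp).div_const (Real.sqrt (2 * Real.pi * σ ^ 2 * t))
  refine h2.congr_deriv ?_
  rw [gaussDens]
  field_simp

lemma gd_eq {σ t : ℝ} (hσ : 0 < σ) (ht : 0 < t) (x : ℝ) :
    gaussDens σ t x = ProbabilityTheory.gaussianPDFReal 0 (σ ^ 2 * t).toNNReal x := by
  have hv := hv_pos hσ ht
  rw [ProbabilityTheory.gaussianPDFReal, gaussDens, Real.coe_toNNReal _ hv.le, sub_zero,
    div_eq_inv_mul]
  congr 2 <;> ring

lemma gd_integral {σ t : ℝ} (hσ : 0 < σ) (ht : 0 < t) : ∫ x, gaussDens σ t x = 1 := by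
  simp_rw [gd_eq hσ ht]
  exact ProbabilityTheory.integral_gaussianPDFReal_eq_one 0
    (by simp [Real.toNNReal_eq_zero, not_le, hv_pos hσ ht])

lemma gd_integrable {σ t : ℝ} (hσ : 0 < σ) (ht : 0 < t) : Integrable (gaussDens σ t) := by
  simp_rw [funext (gd_eq hσ ht)]
  exact ProbabilityTheory.integrable_gaussianPDFReal 0 _

lemma sq_mul_exp_integrable {b : ℝ} (hb : 0 < b) :
    Integrable (fun x : ℝ => x ^ 2 * Real.exp (-b * x ^ 2)) := by
  have := integrable_rpow_mul_exp_neg_mul_sq hb (s := 2) (by norm_num)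
  refine this.congr (ae_of_all _ fun x => ?_)
  show x ^ (2:ℝ) * Real.exp (-b * x ^ 2) = x ^ (2:ℕ) * Real.exp (-b * x ^ 2)
  rw [show ((2:ℝ) = ((2:ℕ):ℝ)) by norm_num, Real.rpow_natCast]

lemma sq_mul_gd_integrable {σ t : ℝ} (hσ : 0 < σ) (ht : 0 < t) :
    Integrable (fun x => x ^ 2 * gaussDens σ t x) := by
  have hv := hv_pos hσ ht
  have hb : 0 < (2 * σ ^ 2 * t)⁻¹ := by rw [show 2 * σ ^ 2 * t = 2*(σ^2*t) by ring]; positivity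
  have := (sq_mul_exp_integrable hb).div_const (Real.sqrt (2 * Real.pi * σ ^ 2 * t))
  refine this.congr (ae_of_all _ fun x => ?_)
  show x ^ 2 * Real.exp (-(2 * σ ^ 2 * t)⁻¹ * x ^ 2) / Real.sqrt (2 * Real.pi * σ ^ 2 * t)
      = x ^ 2 * gaussDens σ t x
  rw [gaussDens, mul_div_assoc]
  congr 2
  rw [neg_mul, neg_div, inv_mul_eq_div]

lemma integral_sq_exp {b : ℝ} (hb : 0 < b) :
    ∫ x : ℝ, x ^ 2 * Real.exp (-b * x ^ 2) = Real.sqrt (π / b) / (2 * b) := by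
  set f : ℝ → ℝ := fun x => -(x / (2 * b)) * Real.exp (-b * x ^ 2) with hf
  set f' : ℝ → ℝ := fun x => x ^ 2 * Real.exp (-b * x ^ 2)
    - (1 / (2 * b)) * Real.exp (-b * x ^ 2) with hf'
  have hderiv : ∀ x, HasDerivAt f (f' x) x := by
    intro x
    have h1 : HasDerivAt (fun x : ℝ => Real.exp (-b * x ^ 2))
        (Real.exp (-b * x ^ 2) * (-b * (2 * x ^ 1))) x :=
      ((hasDerivAt_pow 2 x).const_mul (-b)).exp
    have h2 := ((hasDerivAt_id x).div_const (2 * b)).neg.mul h1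
    refine h2.congr_deriv ?_
    simp only [hf', id_eq, pow_one, Pi.neg_apply]
    field_simp
    ring
  have hint : Integrable f' :=
    (sq_mul_exp_integrable hb).sub ((integrable_exp_neg_mul_sq hb).const_mul _)
  have hbound : ∀ x : ℝ, ‖f x‖ ≤ Real.sqrt (2 / b) / (2 * b) * Real.exp (-(b/2) * x ^ 2) := by
    intro x
    have hxe : |x| * Real.exp (-(b/2) * x ^ 2) ≤ Real.sqrt (2/b) := by
      have h1 := abs_mul_exp_le (v := 1/b) (by positivity) x
      have h2 : -(x ^ 2) / (2 * (1/b)) = -(b/2) * x ^ 2 := by field_simp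
      have h4 : 2 * (1/b) = 2/b := by ring
      rw [h2, h4] at h1; exact h1
    have key : Real.exp (-(b/2) * x ^ 2) * Real.exp (-(b/2) * x ^ 2) = Real.exp (-b * x ^ 2) := by
      rw [← Real.exp_add]; ring_nf
    have hnf : ‖f x‖ = |x| / (2*b) * Real.exp (-b * x ^ 2) := by
      rw [hf]
      simp only [norm_mul, norm_neg, norm_div, Real.norm_eq_abs, Real.abs_exp]
      rw [abs_of_nonneg (by norm_num : (0:ℝ) ≤ 2), abs_of_pos hb]
    rw [hnf]
    calc |x| / (2*b) * Real.exp (-b * x ^ 2)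
        = (|x| * Real.exp (-(b/2) * x ^ 2) * Real.exp (-(b/2) * x ^ 2)) / (2*b) := by
          rw [mul_assoc, key]; ring
      _ ≤ (Real.sqrt (2/b) * Real.exp (-(b/2) * x ^ 2)) / (2*b) := by
          gcongr
      _ = Real.sqrt (2/b) / (2*b) * Real.exp (-(b/2) * x ^ 2) := by ring
  have htend : ∀ l : Filter ℝ, Tendsto (fun x : ℝ => x ^ 2) l atTop →
      Tendsto f l (𝓝 0) := by
    intro l hl
    apply squeeze_zero_norm hbound
    have h5 : Tendsto (fun x : ℝ => Real.exp (-(b/2) * x ^ 2)) l (𝓝 0) :=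
      Real.tendsto_exp_atBot.comp (Tendsto.const_mul_atTop_of_neg (by linarith) hl)
    simpa using h5.const_mul (Real.sqrt (2/b) / (2*b))
  have hsq_bot : Tendsto (fun x : ℝ => x ^ 2) atBot atTop := by
    have := (tendsto_pow_atTop (two_ne_zero)).comp (tendsto_neg_atBot_atTop : Tendsto (fun x:ℝ => -x) atBot atTop)
    refine this.congr fun x => ?_
    simp
  have h0 := MeasureTheory.integral_of_hasDerivAt_of_tendsto hderiv hint
    (htend atBot hsq_bot) (htend atTop (tendsto_pow_atTop two_ne_zero))
  rw [sub_zero] at h0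
  have h1 : ∫ x : ℝ, f' x = (∫ x : ℝ, x ^ 2 * Real.exp (-b * x ^ 2))
      - (1 / (2*b)) * ∫ x : ℝ, Real.exp (-b * x ^ 2) := by
    rw [hf']
    rw [integral_sub (sq_mul_exp_integrable hb) ((integrable_exp_neg_mul_sq hb).const_mul _),
      integral_const_mul]
  rw [h1, integral_gaussian, sub_eq_zero] at h0
  rw [h0]
  ring

lemma integral_sq_gd {σ t : ℝ} (hσ : 0 < σ) (ht : 0 < t) :
    ∫ x, x ^ 2 * gaussDens σ t x = σ ^ 2 * t := by
  have hv := hv_pos hσ ht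
  have hb : 0 < (2 * (σ ^ 2 * t))⁻¹ := by positivity
  have h := integral_sq_exp hb
  have heq : ∀ x : ℝ, x ^ 2 * gaussDens σ t x
      = (x ^ 2 * Real.exp (-(2 * (σ ^ 2 * t))⁻¹ * x ^ 2)) / Real.sqrt (2 * Real.pi * σ ^ 2 * t) := by
    intro x
    rw [gaussDens, mul_div_assoc]
    congr 2
    rw [neg_mul, neg_div, inv_mul_eq_div, show 2 * σ ^ 2 * t = 2 * (σ ^ 2 * t) by ring]
  simp_rw [heq]
  rw [integral_div, h]
  rw [show π / (2 * (σ ^ 2 * t))⁻¹ = 2 * π * σ ^ 2 * t by field_simp]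
  rw [show (2 * (2 * (σ ^ 2 * t))⁻¹) = (σ ^ 2 * t)⁻¹ by field_simp]
  have hs : 0 < Real.sqrt (2 * Real.pi * σ ^ 2 * t) := by
    apply Real.sqrt_pos.2; have := Real.pi_pos; nlinarith
  field_simp

theorem stmt_15 (σ t : ℝ) (hσ : 0 < σ) (ht : 0 < t)
    (νJ : Measure ℝ) [IsProbabilityMeasure νJ]
    (p' : ℝ → ℝ)
    (hderiv : ∀ x, HasDerivAt (convDens σ t νJ) (p' x) x)
    (hint2 : Integrable (fun x => Real.exp (2 * x) * convDens σ t νJ x)) :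
    ∫ x, |Real.exp x - 1| * |p' x|
      ≤ (1 / (σ * Real.sqrt t)) *
        Real.sqrt (∫ x, (Real.exp x - 1) ^ 2 * convDens σ t νJ x) := by
  have hv : 0 < σ ^ 2 * t := hv_pos hσ ht
  set v : ℝ := σ ^ 2 * t with hvdef
  set g : ℝ → ℝ := gaussDens σ t with hgdef
  set p : ℝ → ℝ := convDens σ t νJ with hpdef
  have hgnn : ∀ x, 0 ≤ g x := gd_nonneg σ t
  have hgcont : Continuous g := gd_cont σ t
  have hpcont : Continuous p := continuous_iff_continuousAt.2 fun x => (hderiv x).continuousAt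
  have hpnn : ∀ x, 0 ≤ p x := fun x => integral_nonneg fun y => hgnn _
  -- integrability in y
  have hgy : ∀ x, Integrable (fun y => g (x - y)) νJ := by
    intro x
    refine Integrable.mono' (integrable_const ((Real.sqrt (2 * Real.pi * σ ^ 2 * t))⁻¹))
      ((hgcont.comp (continuous_const.sub continuous_id)).aestronglyMeasurable)
      (ae_of_all _ fun y => ?_)
    rw [Real.norm_eq_abs, abs_of_nonneg (hgnn _)]
    exact gd_le hσ ht _
  have hKle : ∀ z : ℝ, |z| / v * g z ≤
      Real.sqrt (2 * σ ^ 2 * t) * (Real.sqrt (2 * Real.pi * σ ^ 2 * t))⁻¹ / v := by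
    intro z
    rw [div_mul_eq_mul_div]
    exact div_le_div_of_nonneg_right (gd_abs_mul_le hσ ht z) hv.le
  have hKnn : ∀ x y : ℝ, 0 ≤ |x - y| / v * g (x - y) := fun x y =>
    mul_nonneg (div_nonneg (abs_nonneg _) hv.le) (hgnn _)
  have hKcont : Continuous (fun z : ℝ × ℝ => |z.1 - z.2| / v * g (z.1 - z.2)) := by
    have h1 : Continuous (fun z : ℝ × ℝ => z.1 - z.2) := continuous_fst.sub continuous_snd
    exact ((h1.abs.div_const v).mul (hgcont.comp h1))
  have hKint : ∀ x, Integrable (fun y => |x - y| / v * g (x - y)) νJ := by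
    intro x
    refine Integrable.mono' (integrable_const
        (Real.sqrt (2 * σ ^ 2 * t) * (Real.sqrt (2 * Real.pi * σ ^ 2 * t))⁻¹ / v))
      ((hKcont.comp (Continuous.prodMk_right x)).aestronglyMeasurable)
      (ae_of_all _ fun y => ?_)
    rw [Real.norm_eq_abs, abs_of_nonneg (hKnn x y)]
    exact hKle _
  -- derivative formula
  have p'eq : ∀ x, p' x = ∫ y, -((x - y) / v) * g (x - y) ∂νJ := by
    intro x₀
    have key := hasDerivAt_integral_of_dominated_loc_of_deriv_le (μ := νJ)
      (F := fun x y => g (x - y)) (F' := fun x y => -((x - y) / v) * g (x - y))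
      (x₀ := x₀) (s := Metric.ball x₀ 1)
      (bound := fun _ => Real.sqrt (2 * σ ^ 2 * t) * (Real.sqrt (2 * Real.pi * σ ^ 2 * t))⁻¹ / v)
      (Metric.ball_mem_nhds x₀ one_pos)
      (Eventually.of_forall fun x =>
        ((hgcont.comp (continuous_const.sub continuous_id)).aestronglyMeasurable))
      (hgy x₀)
      ((((continuous_const.sub continuous_id).div_const v).neg.mul
        (hgcont.comp (continuous_const.sub continuous_id))).aestronglyMeasurable)
      (ae_of_all _ fun y x _ => by
        rw [Real.norm_eq_abs, abs_mul, abs_neg, abs_div, abs_of_pos hv,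
          abs_of_nonneg (hgnn _)]
        exact hKle _)
      (integrable_const _)
      (ae_of_all _ fun y x _ => by
        have h := (gd_hasDerivAt hσ ht (x - y)).comp x ((hasDerivAt_id x).sub_const y)
        exact h.congr_deriv (mul_one _))
    exact (hderiv x₀).unique key.2
  have hple : ∀ x, |p' x| ≤ ∫ y, |x - y| / v * g (x - y) ∂νJ := by
    intro x
    rw [p'eq x, ← Real.norm_eq_abs]
    refine (norm_integral_le_integral_norm _).trans_eq
      (integral_congr_ae (ae_of_all _ fun y => ?_))
    show ‖-((x - y) / v) * g (x - y)‖ = |x - y| / v * g (x - y)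
    rw [Real.norm_eq_abs, abs_mul, abs_neg, abs_div, abs_of_pos hv, abs_of_nonneg (hgnn _)]
  -- integrability of p and friends
  have hglint : ∀ x, ENNReal.ofReal (p x) = ∫⁻ y, ENNReal.ofReal (g (x - y)) ∂νJ := fun x =>
    ofReal_integral_eq_lintegral_ofReal (hgy x) (ae_of_all _ fun y => hgnn _)
  have hgprodmeas : AEMeasurable (fun z : ℝ × ℝ => ENNReal.ofReal (g (z.1 - z.2)))
      (volume.prod νJ) :=
    ((hgcont.comp (continuous_fst.sub continuous_snd)).measurable.ennreal_ofReal).aemeasurable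
  have hplint : ∫⁻ x, ENNReal.ofReal (p x) = 1 := by
    calc ∫⁻ x, ENNReal.ofReal (p x)
        = ∫⁻ x, ∫⁻ y, ENNReal.ofReal (g (x - y)) ∂νJ := lintegral_congr fun x => hglint x
      _ = ∫⁻ y, ∫⁻ x, ENNReal.ofReal (g (x - y)) ∂volume ∂νJ :=
          lintegral_lintegral_swap hgprodmeas
      _ = ∫⁻ y, ENNReal.ofReal 1 ∂νJ := by
          refine lintegral_congr fun y => ?_
          rw [← ofReal_integral_eq_lintegral_ofReal ((gd_integrable hσ ht).comp_sub_right y)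
            (ae_of_all _ fun x => hgnn _)]
          rw [integral_sub_right_eq_self g y, gd_integral hσ ht]
      _ = 1 := by simp
  have hpint : Integrable p :=
    ⟨hpcont.aestronglyMeasurable, (hasFiniteIntegral_iff_ofReal (ae_of_all _ hpnn)).2
      (by rw [hplint]; exact ENNReal.one_lt_top)⟩
  have he1 : Integrable (fun x => Real.exp x * p x) := by
    refine Integrable.mono' (((hpint.add hint2).const_mul (1/2 : ℝ)))
      ((continuous_exp.mul hpcont).aestronglyMeasurable) (ae_of_all _ fun x => ?_)
    rw [Real.norm_eq_abs, abs_of_nonneg (mul_nonneg (Real.exp_pos x).le (hpnn x))]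
    show Real.exp x * p x ≤ 1/2 * (p x + Real.exp (2*x) * p x)
    rw [two_mul, Real.exp_add]
    nlinarith [mul_nonneg (sq_nonneg (Real.exp x - 1)) (hpnn x)]
  have hS : Integrable (fun x => (Real.exp x - 1) ^ 2 * p x) := by
    refine ((hint2.sub (he1.const_mul 2)).add hpint).congr (ae_of_all _ fun x => ?_)
    simp only [Pi.add_apply, Pi.sub_apply]
    show Real.exp (2*x) * p x - 2 * (Real.exp x * p x) + p x = (Real.exp x - 1) ^ 2 * p x
    rw [two_mul, Real.exp_add]
    ring
  set S : ℝ := ∫ x, (Real.exp x - 1) ^ 2 * p x with hSdef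
  have hSnn : 0 ≤ S := integral_nonneg fun x => mul_nonneg (sq_nonneg _) (hpnn x)
  -- p' measurable
  have hp'meas : Measurable p' := by
    have : p' = deriv p := funext fun x => ((hderiv x).deriv).symm
    rw [this]
    exact measurable_deriv p
  -- ENNReal kernels
  set Φ : ℝ × ℝ → ℝ≥0∞ :=
    fun z => ENNReal.ofReal (|Real.exp z.1 - 1| * Real.sqrt (g (z.1 - z.2))) with hΦdef
  set Ψ : ℝ × ℝ → ℝ≥0∞ :=
    fun z => ENNReal.ofReal (|z.1 - z.2| / v * Real.sqrt (g (z.1 - z.2))) with hΨdef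
  have hsub : Continuous (fun z : ℝ × ℝ => z.1 - z.2) := continuous_fst.sub continuous_snd
  have hΦmeas : AEMeasurable Φ (volume.prod νJ) := by
    refine Measurable.aemeasurable (Measurable.ennreal_ofReal (Continuous.measurable ?_))
    exact ((continuous_exp.comp continuous_fst).sub continuous_const).abs.mul
      ((continuous_sqrt.comp (hgcont.comp hsub)))
  have hΨmeas : AEMeasurable Ψ (volume.prod νJ) := by
    refine Measurable.aemeasurable (Measurable.ennreal_ofReal (Continuous.measurable ?_))
    exact (hsub.abs.div_const v).mul (continuous_sqrt.comp (hgcont.comp hsub))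
  have hΦΨ : ∀ z : ℝ × ℝ, Φ z * Ψ z
      = ENNReal.ofReal (|Real.exp z.1 - 1| * (|z.1 - z.2| / v * g (z.1 - z.2))) := by
    intro z
    rw [hΦdef, hΨdef, ← ENNReal.ofReal_mul (by positivity)]
    congr 1
    symm
    rw [mul_mul_mul_comm, Real.mul_self_sqrt (hgnn _), mul_assoc]
  -- main chain
  have main : ∫⁻ x, ENNReal.ofReal (|Real.exp x - 1| * |p' x|)
      ≤ ENNReal.ofReal (Real.sqrt S * Real.sqrt v⁻¹) := by
    have step1 : ∫⁻ x, ENNReal.ofReal (|Real.exp x - 1| * |p' x|)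
        ≤ ∫⁻ z, Φ z * Ψ z ∂(volume.prod νJ) := by
      rw [lintegral_prod _ (by
        simp_rw [hΦΨ]
        exact (Measurable.ennreal_ofReal (Continuous.measurable
          (((continuous_exp.comp continuous_fst).sub continuous_const).abs.mul
            hKcont))).aemeasurable)]
      refine lintegral_mono fun x => ?_
      calc ENNReal.ofReal (|Real.exp x - 1| * |p' x|)
          ≤ ENNReal.ofReal (|Real.exp x - 1| * ∫ y, |x - y| / v * g (x - y) ∂νJ) :=
            ENNReal.ofReal_le_ofReal
              (mul_le_mul_of_nonneg_left (hple x) (abs_nonneg _))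
        _ = ENNReal.ofReal (|Real.exp x - 1|)
            * ENNReal.ofReal (∫ y, |x - y| / v * g (x - y) ∂νJ) :=
            ENNReal.ofReal_mul (abs_nonneg _)
        _ = ENNReal.ofReal (|Real.exp x - 1|)
            * ∫⁻ y, ENNReal.ofReal (|x - y| / v * g (x - y)) ∂νJ := by
            rw [ofReal_integral_eq_lintegral_ofReal (hKint x) (ae_of_all _ fun y => hKnn x y)]
        _ = ∫⁻ y, ENNReal.ofReal (|Real.exp x - 1|)
            * ENNReal.ofReal (|x - y| / v * g (x - y)) ∂νJ :=
            (lintegral_const_mul' _ _ ENNReal.ofReal_ne_top).symm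
        _ = ∫⁻ y, Φ (x, y) * Ψ (x, y) ∂νJ := by
            refine lintegral_congr fun y => ?_
            rw [hΦΨ (x, y), ← ENNReal.ofReal_mul (abs_nonneg _)]
    have step2 := ENNReal.lintegral_mul_le_Lp_mul_Lq (volume.prod νJ)
      (Real.HolderConjugate.two_two) hΦmeas hΨmeas
    have step3 : ∫⁻ z, Φ z ^ (2:ℝ) ∂(volume.prod νJ) = ENNReal.ofReal S := by
      have hpt : ∀ z : ℝ × ℝ, Φ z ^ (2:ℝ)
          = ENNReal.ofReal ((Real.exp z.1 - 1) ^ 2 * g (z.1 - z.2)) := by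
        intro z
        show ENNReal.ofReal (|Real.exp z.1 - 1| * Real.sqrt (g (z.1 - z.2))) ^ (2:ℝ)
            = ENNReal.ofReal ((Real.exp z.1 - 1) ^ 2 * g (z.1 - z.2))
        rw [ENNReal.ofReal_rpow_of_nonneg (by positivity) (by norm_num)]
        congr 1
        rw [show ((2:ℝ) = ((2:ℕ):ℝ)) by norm_num, Real.rpow_natCast, mul_pow, sq_abs,
          Real.sq_sqrt (hgnn _)]
      simp_rw [hpt]
      have hmeas3 : AEMeasurable
          (fun z : ℝ × ℝ => ENNReal.ofReal ((Real.exp z.1 - 1) ^ 2 * g (z.1 - z.2)))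
          (volume.prod νJ) :=
        (Measurable.ennreal_ofReal (Continuous.measurable
          ((((continuous_exp.comp continuous_fst).sub continuous_const).pow 2).mul
            (hgcont.comp hsub)))).aemeasurable
      rw [lintegral_prod _ hmeas3]
      calc ∫⁻ x, ∫⁻ y, ENNReal.ofReal ((Real.exp x - 1) ^ 2 * g (x - y)) ∂νJ
          = ∫⁻ x, ENNReal.ofReal ((Real.exp x - 1) ^ 2) * ENNReal.ofReal (p x) := by
            refine lintegral_congr fun x => ?_
            rw [hglint x, ← lintegral_const_mul' _ _ ENNReal.ofReal_ne_top]
            exact lintegral_congr fun y => ENNReal.ofReal_mul (sq_nonneg _)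
        _ = ∫⁻ x, ENNReal.ofReal ((Real.exp x - 1) ^ 2 * p x) :=
            lintegral_congr fun x => (ENNReal.ofReal_mul (sq_nonneg _)).symm
        _ = ENNReal.ofReal S :=
            (ofReal_integral_eq_lintegral_ofReal hS
              (ae_of_all _ fun x => mul_nonneg (sq_nonneg _) (hpnn x))).symm
    have hq2int : Integrable (fun z : ℝ => z ^ 2 / v ^ 2 * g z) := by
      have h := (sq_mul_gd_integrable hσ ht).div_const (v ^ 2)
      refine h.congr (ae_of_all _ fun z => ?_)
      show z ^ 2 * g z / v ^ 2 = z ^ 2 / v ^ 2 * g z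
      ring
    have hq2 : ∫ z : ℝ, z ^ 2 / v ^ 2 * g z = v⁻¹ := by
      have heq : ∀ z : ℝ, z ^ 2 / v ^ 2 * g z = (z ^ 2 * g z) / v ^ 2 := fun z => by ring
      simp_rw [heq]
      rw [integral_div]
      rw [show ∫ x : ℝ, x ^ 2 * g x = σ ^ 2 * t from integral_sq_gd hσ ht, ← hvdef]
      field_simp [sq]
    have step4 : ∫⁻ z, Ψ z ^ (2:ℝ) ∂(volume.prod νJ) = ENNReal.ofReal v⁻¹ := by
      have hpt : ∀ z : ℝ × ℝ, Ψ z ^ (2:ℝ)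
          = ENNReal.ofReal ((z.1 - z.2) ^ 2 / v ^ 2 * g (z.1 - z.2)) := by
        intro z
        show ENNReal.ofReal (|z.1 - z.2| / v * Real.sqrt (g (z.1 - z.2))) ^ (2:ℝ)
            = ENNReal.ofReal ((z.1 - z.2) ^ 2 / v ^ 2 * g (z.1 - z.2))
        rw [ENNReal.ofReal_rpow_of_nonneg (by positivity) (by norm_num)]
        congr 1
        rw [show ((2:ℝ) = ((2:ℕ):ℝ)) by norm_num, Real.rpow_natCast, mul_pow, div_pow, sq_abs,
          Real.sq_sqrt (hgnn _)]
      have hmeas2 : AEMeasurable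
          (fun z : ℝ × ℝ => ENNReal.ofReal ((z.1 - z.2) ^ 2 / v ^ 2 * g (z.1 - z.2)))
          (volume.prod νJ) :=
        (Measurable.ennreal_ofReal (Continuous.measurable
          (((hsub.pow 2).div_const (v ^ 2)).mul (hgcont.comp hsub)))).aemeasurable
      simp_rw [hpt]
      rw [lintegral_prod _ hmeas2, lintegral_lintegral_swap hmeas2]
      calc ∫⁻ y, ∫⁻ x, ENNReal.ofReal ((x - y) ^ 2 / v ^ 2 * g (x - y)) ∂volume ∂νJ
          = ∫⁻ y, ENNReal.ofReal v⁻¹ ∂νJ := by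
            refine lintegral_congr fun y => ?_
            rw [← ofReal_integral_eq_lintegral_ofReal (hq2int.comp_sub_right y)
              (ae_of_all _ fun x => mul_nonneg (by positivity) (hgnn _))]
            rw [integral_sub_right_eq_self (fun z => z ^ 2 / v ^ 2 * g z) y, hq2]
        _ = ENNReal.ofReal v⁻¹ := by simp
    calc ∫⁻ x, ENNReal.ofReal (|Real.exp x - 1| * |p' x|)
        ≤ ∫⁻ z, Φ z * Ψ z ∂(volume.prod νJ) := step1
      _ ≤ (∫⁻ z, Φ z ^ (2:ℝ) ∂(volume.prod νJ)) ^ (1/(2:ℝ))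
          * (∫⁻ z, Ψ z ^ (2:ℝ) ∂(volume.prod νJ)) ^ (1/(2:ℝ)) := step2
      _ = (ENNReal.ofReal S) ^ (1/(2:ℝ)) * (ENNReal.ofReal v⁻¹) ^ (1/(2:ℝ)) := by
          rw [step3, step4]
      _ = ENNReal.ofReal (Real.sqrt S * Real.sqrt v⁻¹) := by
          rw [ENNReal.ofReal_mul (Real.sqrt_nonneg _), Real.sqrt_eq_rpow, Real.sqrt_eq_rpow,
            ← ENNReal.ofReal_rpow_of_nonneg hSnn (by norm_num),
            ← ENNReal.ofReal_rpow_of_nonneg (inv_nonneg.2 hv.le) (by norm_num)]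
  have lhs_eq : ∫ x, |Real.exp x - 1| * |p' x|
      = (∫⁻ x, ENNReal.ofReal (|Real.exp x - 1| * |p' x|)).toReal := by
    rw [integral_eq_lintegral_of_nonneg_ae (f := fun x => |Real.exp x - 1| * |p' x|)
      (ae_of_all _ fun x => mul_nonneg (abs_nonneg _) (abs_nonneg _))
      (((continuous_exp.sub continuous_const).abs.measurable.mul
        hp'meas.abs).aestronglyMeasurable)]
  rw [lhs_eq]
  have hfin := ENNReal.toReal_mono ENNReal.ofReal_ne_top main
  rw [ENNReal.toReal_ofReal (mul_nonneg (Real.sqrt_nonneg _) (Real.sqrt_nonneg _))] at hfin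
  refine hfin.trans_eq ?_
  rw [Real.sqrt_inv, hvdef, Real.sqrt_mul (sq_nonneg σ), Real.sqrt_sq hσ.le]
  ring
end
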